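/- arXiv:1803.08089 — 6 statements merged into one kernel-verified Lean document; each statement's English description precedes it below -/
import Mathlib

section
/- Let G₁, G₂ be positive semidefinite d×d matrices, γ > 0, and y ∈ ℝⁿ (viewed in ℝ^d as appropriate). If w₁, w₂ satisfy (Gᵢ + γI)wᵢ = y for i = 1,2, then |‖w₁‖² − ‖w₂‖²| ≤ 2γ⁻³ ‖G₁ − G₂‖_∞ ‖y‖². -/
open Matrix Finset MeasureTheory

noncomputable def opNorm {d : ℕ} (A : Matrix (Fin d) (Fin d) ℝ) : ℝ :=
  ‖Matrix.toEuclideanCLM (𝕜 := ℝ) A‖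

noncomputable def frobNorm {m n : ℕ} (A : Matrix (Fin m) (Fin n) ℝ) : ℝ :=
  Real.sqrt (∑ i, ∑ j, (A i j) ^ 2)

noncomputable def ev {d : ℕ} (v : Fin d → ℝ) : EuclideanSpace ℝ (Fin d) :=
  (WithLp.equiv 2 (Fin d → ℝ)).symm v

lemma ev_normsq {d : ℕ} (v : Fin d → ℝ) : ‖ev v‖ ^ 2 = ∑ i, v i ^ 2 := by
  rw [EuclideanSpace.norm_eq, Real.sq_sqrt (by positivity)]
  simp [ev, sq_abs]

lemma ev_mulVec_le {d : ℕ} (A : Matrix (Fin d) (Fin d) ℝ) (v : Fin d → ℝ) :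
    ‖ev (A *ᵥ v)‖ ≤ opNorm A * ‖ev v‖ := by
  have h : ev (A *ᵥ v) = Matrix.toEuclideanCLM (𝕜 := ℝ) A (ev v) := by
    simp [ev, Matrix.toLin'_apply]
  rw [h]
  exact (Matrix.toEuclideanCLM (𝕜 := ℝ) A).le_opNorm _

lemma coercive {d : ℕ} {G : Matrix (Fin d) (Fin d) ℝ} (hG : G.PosSemidef)
    {γ : ℝ} (hγ : 0 < γ) (v : Fin d → ℝ) :
    γ * ‖ev v‖ ≤ ‖ev ((G + γ • (1 : Matrix (Fin d) (Fin d) ℝ)) *ᵥ v)‖ := by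
  set A := G + γ • (1 : Matrix (Fin d) (Fin d) ℝ)
  have hinner : inner ℝ (ev v) (ev (A *ᵥ v)) = v ⬝ᵥ (G *ᵥ v) + γ * ‖ev v‖ ^ 2 := by
    rw [ev_normsq]
    simp only [PiLp.inner_apply, RCLike.inner_apply, starRingEnd_apply, star_trivial]
    simp only [ev, WithLp.equiv_symm_apply, WithLp.ofLp_toLp, A, Matrix.add_mulVec, Matrix.smul_mulVec,
      Matrix.one_mulVec, dotProduct, Pi.add_apply, Pi.smul_apply, smul_eq_mul]
    rw [Finset.mul_sum, ← Finset.sum_add_distrib]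
    congr 1; ext i; ring
  have hpos : 0 ≤ v ⬝ᵥ (G *ᵥ v) := by
    have := hG.dotProduct_mulVec_nonneg v
    simpa using this
  have hcs : inner ℝ (ev v) (ev (A *ᵥ v)) ≤ ‖ev v‖ * ‖ev (A *ᵥ v)‖ :=
    real_inner_le_norm _ _
  have key : γ * ‖ev v‖ ^ 2 ≤ ‖ev v‖ * ‖ev (A *ᵥ v)‖ := by
    rw [hinner] at hcs; linarith
  rcases eq_or_lt_of_le (norm_nonneg (ev v)) with h0 | h0
  · rw [← h0]; simp [norm_nonneg]
  · nlinarith [norm_nonneg (ev (A *ᵥ v))]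

theorem stmt2 {d : ℕ} (G₁ G₂ : Matrix (Fin d) (Fin d) ℝ)
    (h1 : G₁.PosSemidef) (h2 : G₂.PosSemidef) (γ : ℝ) (hγ : 0 < γ)
    (y w₁ w₂ : Fin d → ℝ)
    (hw₁ : (G₁ + γ • (1 : Matrix (Fin d) (Fin d) ℝ)) *ᵥ w₁ = y)
    (hw₂ : (G₂ + γ • (1 : Matrix (Fin d) (Fin d) ℝ)) *ᵥ w₂ = y) :
    |(∑ i, w₁ i ^ 2) - ∑ i, w₂ i ^ 2|
      ≤ 2 / γ ^ 3 * opNorm (G₁ - G₂) * ∑ i, y i ^ 2 := by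
  set A₁ := G₁ + γ • (1 : Matrix (Fin d) (Fin d) ℝ) with hA₁
  have hdiff : A₁ *ᵥ (w₁ - w₂) = (G₂ - G₁) *ᵥ w₂ := by
    rw [Matrix.mulVec_sub, hw₁, ← hw₂]
    simp [hA₁, Matrix.add_mulVec, Matrix.sub_mulVec]
  set n1 := ‖ev w₁‖ with hn1
  set n2 := ‖ev w₂‖ with hn2
  set ny := ‖ev y‖ with hny
  set D := opNorm (G₁ - G₂) with hD
  have hDnn : 0 ≤ D := norm_nonneg _
  have b1 : γ * n1 ≤ ny := by rw [hny, ← hw₁]; exact coercive h1 hγ w₁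
  have b2 : γ * n2 ≤ ny := by rw [hny, ← hw₂]; exact coercive h2 hγ w₂
  set δ := ‖ev w₁ - ev w₂‖ with hδ
  have hδnn : 0 ≤ δ := norm_nonneg _
  have b3 : γ * δ ≤ D * n2 := by
    have h' : ev (w₁ - w₂) = ev w₁ - ev w₂ := by simp [ev]
    have := coercive h1 hγ (w₁ - w₂)
    rw [h'] at this
    refine this.trans ?_
    rw [hdiff]
    have := ev_mulVec_le (G₂ - G₁) w₂
    have hneg : opNorm (G₂ - G₁) = D := by
      rw [hD, opNorm, opNorm, (neg_sub G₂ G₁).symm, map_neg, norm_neg]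
    rwa [hneg] at this
  have b4 : |n1 ^ 2 - n2 ^ 2| ≤ δ * (n1 + n2) := by
    have h := abs_norm_sub_norm_le (ev w₁) (ev w₂)
    have hn1n : 0 ≤ n1 := norm_nonneg _
    have hn2n : 0 ≤ n2 := norm_nonneg _
    have : |n1 ^ 2 - n2 ^ 2| = |n1 - n2| * (n1 + n2) := by
      rw [← abs_of_nonneg (by linarith : (0:ℝ) ≤ n1 + n2), ← abs_mul]
      ring_nf
    rw [this]
    exact mul_le_mul_of_nonneg_right h (by linarith)
  have e1 : ∑ i, w₁ i ^ 2 = n1 ^ 2 := (ev_normsq w₁).symm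
  have e2 : ∑ i, w₂ i ^ 2 = n2 ^ 2 := (ev_normsq w₂).symm
  have e3 : ∑ i, y i ^ 2 = ny ^ 2 := (ev_normsq y).symm
  rw [e1, e2, e3]
  have hγ3 : 0 < γ ^ 3 := by positivity
  have hnyn : 0 ≤ ny := norm_nonneg _
  have hn1n : 0 ≤ n1 := norm_nonneg _
  have hn2n : 0 ≤ n2 := norm_nonneg _
  rw [div_mul_eq_mul_div, div_mul_eq_mul_div, le_div_iff₀ hγ3]
  calc |n1 ^ 2 - n2 ^ 2| * γ ^ 3 ≤ (δ * (n1 + n2)) * γ ^ 3 := by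
        exact mul_le_mul_of_nonneg_right b4 (le_of_lt hγ3)
    _ = γ * ((γ * δ) * ((γ * n1) + (γ * n2))) := by ring
    _ ≤ γ * ((D * n2) * (ny + ny)) := by
        apply mul_le_mul_of_nonneg_left _ (le_of_lt hγ)
        apply mul_le_mul b3 (by linarith) (by positivity) (by positivity)
    _ ≤ γ * ((D * (ny / γ)) * (ny + ny)) := by
        have h5 : n2 ≤ ny / γ := by rw [le_div_iff₀ hγ]; linarith
        apply mul_le_mul_of_nonneg_left _ (le_of_lt hγ)
        apply mul_le_mul_of_nonneg_right (mul_le_mul_of_nonneg_left h5 hDnn) (by linarith)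
    _ = 2 * D * ny ^ 2 := by field_simp; ring
end

section
/- Let X ∈ ℝ^{n×d} with all rows of Euclidean norm at most 1, y ∈ [0,1]ⁿ, and define L(D) = n ‖(XDXᵀ + nI)⁻¹ y‖². Then for all positive semidefinite D₁, D₂, |L(D₁) − L(D₂)| ≤ 2 ‖D₁ − D₂‖_F, i.e., L is 2-Lipschitz with respect to the Frobenius norm. -/
open Matrix Finset MeasureTheory

/-- Row-wise Cauchy–Schwarz: the squared Euclidean norm of `M *ᵥ w` is at most
the squared Frobenius norm of `M` times the squared norm of `w`. -/
lemma sumsq_mulVec_le {a b : ℕ} (M : Matrix (Fin a) (Fin b) ℝ) (w : Fin b → ℝ) :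
    ∑ i, ((M *ᵥ w) i) ^ 2 ≤ (∑ i, ∑ j, (M i j) ^ 2) * ∑ j, (w j) ^ 2 := by
  have h : ∀ i, ((M *ᵥ w) i) ^ 2 ≤ (∑ j, (M i j) ^ 2) * ∑ j, (w j) ^ 2 := by
    intro i
    have : (M *ᵥ w) i = ∑ j, M i j * w j := rfl
    rw [this]
    exact Finset.sum_mul_sq_le_sq_mul_sq _ _ _
  calc ∑ i, ((M *ᵥ w) i) ^ 2 ≤ ∑ i, ((∑ j, (M i j) ^ 2) * ∑ j, (w j) ^ 2) :=
        Finset.sum_le_sum fun i _ => h i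
    _ = _ := (Finset.sum_mul _ _ _).symm

theorem stmt6 {n d : ℕ} (X : Matrix (Fin n) (Fin d) ℝ) (y : Fin n → ℝ)
    (hX : ∀ i, ∑ j, (X i j) ^ 2 ≤ 1) (hy : ∀ i, y i ∈ Set.Icc (0:ℝ) 1)
    (L : Matrix (Fin d) (Fin d) ℝ → ℝ)
    (hL : ∀ D, L D = (n : ℝ) *
      ∑ i, (((X * D * Xᵀ + (n : ℝ) • (1 : Matrix (Fin n) (Fin n) ℝ))⁻¹ *ᵥ y) i) ^ 2)
    (D₁ D₂ : Matrix (Fin d) (Fin d) ℝ) (h1 : D₁.PosSemidef) (h2 : D₂.PosSemidef) :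
    |L D₁ - L D₂| ≤ 2 * frobNorm (D₁ - D₂) := by
  have hfrobnn : 0 ≤ frobNorm (D₁ - D₂) := Real.sqrt_nonneg _
  rcases Nat.eq_zero_or_pos n with hn | hn
  · subst hn
    rw [hL, hL]
    simpa using by positivity
  have hn' : (0:ℝ) < n := by exact_mod_cast hn
  -- Notation
  set A₁ : Matrix (Fin n) (Fin n) ℝ := X * D₁ * Xᵀ + (n : ℝ) • 1 with hA₁def
  set A₂ : Matrix (Fin n) (Fin n) ℝ := X * D₂ * Xᵀ + (n : ℝ) • 1 with hA₂def
  -- Positive definiteness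
  have hXT : ∀ (D : Matrix (Fin d) (Fin d) ℝ), D.PosSemidef →
      (X * D * Xᵀ).PosSemidef := by
    intro D hD
    have := hD.mul_mul_conjTranspose_same X
    simpa using this
  have hIpd : ((n : ℝ) • (1 : Matrix (Fin n) (Fin n) ℝ)).PosDef := by
    rw [Matrix.smul_one_eq_diagonal]
    exact Matrix.posDef_diagonal_iff.mpr fun _ => hn'
  have hA₁pd : A₁.PosDef := Matrix.PosDef.posSemidef_add (hXT D₁ h1) hIpd
  have hA₂pd : A₂.PosDef := Matrix.PosDef.posSemidef_add (hXT D₂ h2) hIpd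
  have hdet₁ : IsUnit A₁.det := (Matrix.isUnit_iff_isUnit_det _).mp hA₁pd.isUnit
  have hdet₂ : IsUnit A₂.det := (Matrix.isUnit_iff_isUnit_det _).mp hA₂pd.isUnit
  -- quadratic form lower bound
  have hquad : ∀ (D : Matrix (Fin d) (Fin d) ℝ), D.PosSemidef → ∀ u : Fin n → ℝ,
      (n : ℝ) * ∑ i, (u i) ^ 2 ≤ u ⬝ᵥ ((X * D * Xᵀ + (n : ℝ) • 1) *ᵥ u) := by
    intro D hD u
    have h0 : (0:ℝ) ≤ u ⬝ᵥ ((X * D * Xᵀ) *ᵥ u) := by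
      have := (hXT D hD).dotProduct_mulVec_nonneg u
      simpa using this
    have h1' : u ⬝ᵥ (((n : ℝ) • (1 : Matrix (Fin n) (Fin n) ℝ)) *ᵥ u)
        = (n : ℝ) * ∑ i, (u i) ^ 2 := by
      rw [Matrix.smul_mulVec, Matrix.one_mulVec]
      simp only [dotProduct, Pi.smul_apply, smul_eq_mul]
      rw [Finset.mul_sum]
      exact Finset.sum_congr rfl fun i _ => by ring
    rw [Matrix.add_mulVec, dotProduct_add, h1']
    linarith
  -- contraction bound for the inverse
  have hcontract : ∀ (D : Matrix (Fin d) (Fin d) ℝ) (hD : D.PosSemidef)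
      (hdet : IsUnit (X * D * Xᵀ + (n : ℝ) • (1 : Matrix (Fin n) (Fin n) ℝ)).det)
      (w : Fin n → ℝ),
      (n : ℝ) ^ 2 * ∑ i, (((X * D * Xᵀ + (n : ℝ) • 1)⁻¹ *ᵥ w) i) ^ 2 ≤ ∑ i, (w i) ^ 2 := by
    intro D hD hdet w
    set A : Matrix (Fin n) (Fin n) ℝ := X * D * Xᵀ + (n : ℝ) • 1 with hA
    set u : Fin n → ℝ := A⁻¹ *ᵥ w with hu
    have hAu : A *ᵥ u = w := by
      rw [hu, Matrix.mulVec_mulVec, Matrix.mul_nonsing_inv _ hdet, Matrix.one_mulVec]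
    have hq : (n : ℝ) * ∑ i, (u i) ^ 2 ≤ u ⬝ᵥ w := by
      have := hquad D hD u
      rwa [hAu] at this
    have hSu : (0:ℝ) ≤ ∑ i, (u i) ^ 2 := Finset.sum_nonneg fun i _ => sq_nonneg _
    have hSw : (0:ℝ) ≤ ∑ i, (w i) ^ 2 := Finset.sum_nonneg fun i _ => sq_nonneg _
    have hcs : (u ⬝ᵥ w) ^ 2 ≤ (∑ i, (u i) ^ 2) * ∑ i, (w i) ^ 2 :=
      Finset.sum_mul_sq_le_sq_mul_sq _ _ _
    have hsq : ((n : ℝ) * ∑ i, (u i) ^ 2) ^ 2 ≤ (∑ i, (u i) ^ 2) * ∑ i, (w i) ^ 2 :=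
      le_trans (pow_le_pow_left₀ (mul_nonneg (le_of_lt hn') hSu) hq 2) hcs
    rcases eq_or_lt_of_le hSu with h0 | h0
    · rw [← h0]; simpa using hSw
    · refine le_of_mul_le_mul_right ?_ h0
      calc ((n : ℝ) ^ 2 * ∑ i, (u i) ^ 2) * (∑ i, (u i) ^ 2)
          = ((n : ℝ) * ∑ i, (u i) ^ 2) ^ 2 := by ring
        _ ≤ (∑ i, (u i) ^ 2) * ∑ i, (w i) ^ 2 := hsq
        _ = (∑ i, (w i) ^ 2) * ∑ i, (u i) ^ 2 := mul_comm _ _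
  -- the two solution vectors
  set v₁ : Fin n → ℝ := A₁⁻¹ *ᵥ y with hv₁
  set v₂ : Fin n → ℝ := A₂⁻¹ *ᵥ y with hv₂
  have hA₂v₂ : A₂ *ᵥ v₂ = y := by
    rw [hv₂, Matrix.mulVec_mulVec, Matrix.mul_nonsing_inv _ hdet₂, Matrix.one_mulVec]
  set s₁ : ℝ := ∑ i, (v₁ i) ^ 2 with hs₁
  set s₂ : ℝ := ∑ i, (v₂ i) ^ 2 with hs₂
  have hs₁nn : 0 ≤ s₁ := Finset.sum_nonneg fun i _ => sq_nonneg _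
  have hs₂nn : 0 ≤ s₂ := Finset.sum_nonneg fun i _ => sq_nonneg _
  have hSy : ∑ i, (y i) ^ 2 ≤ (n : ℝ) := by
    calc ∑ i, (y i) ^ 2 ≤ ∑ _i : Fin n, (1:ℝ) := by
          refine Finset.sum_le_sum fun i _ => ?_
          exact pow_le_one₀ (hy i).1 (hy i).2
      _ = (n : ℝ) := by simp
  have hns₁ : (n : ℝ) * s₁ ≤ 1 := by
    have h := le_trans (hcontract D₁ h1 hdet₁ y) hSy
    rw [← hA₁def, ← hv₁, ← hs₁] at h
    refine le_of_mul_le_mul_left ?_ hn'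
    calc (n : ℝ) * ((n : ℝ) * s₁) = (n : ℝ) ^ 2 * s₁ := by ring
      _ ≤ (n : ℝ) := h
      _ = (n : ℝ) * 1 := (mul_one _).symm
  have hns₂ : (n : ℝ) * s₂ ≤ 1 := by
    have h := le_trans (hcontract D₂ h2 hdet₂ y) hSy
    rw [← hA₂def, ← hv₂, ← hs₂] at h
    refine le_of_mul_le_mul_left ?_ hn'
    calc (n : ℝ) * ((n : ℝ) * s₂) = (n : ℝ) ^ 2 * s₂ := by ring
      _ ≤ (n : ℝ) := h
      _ = (n : ℝ) * 1 := (mul_one _).symm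
  -- Frobenius bounds
  set F2 : ℝ := ∑ i, ∑ j, ((D₁ - D₂) i j) ^ 2 with hF2
  have hF2nn : 0 ≤ F2 := Finset.sum_nonneg fun i _ => Finset.sum_nonneg fun j _ => sq_nonneg _
  have hFX : ∑ i, ∑ j, (X i j) ^ 2 ≤ (n : ℝ) := by
    calc ∑ i, ∑ j, (X i j) ^ 2 ≤ ∑ _i : Fin n, (1:ℝ) :=
          Finset.sum_le_sum fun i _ => hX i
      _ = (n : ℝ) := by simp
  have hFXnn : (0:ℝ) ≤ ∑ i, ∑ j, (X i j) ^ 2 := Finset.sum_nonneg fun i _ => Finset.sum_nonneg fun j _ => sq_nonneg _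
  have hFXT : ∑ i, ∑ j, ((Xᵀ) i j) ^ 2 = ∑ i, ∑ j, (X i j) ^ 2 := by
    rw [Finset.sum_comm]; rfl
  -- the difference vector
  set w : Fin n → ℝ := (X * (D₂ - D₁) * Xᵀ) *ᵥ v₂ with hw
  have hvd : v₁ - v₂ = A₁⁻¹ *ᵥ w := by
    have hA₁vd : A₁ *ᵥ (v₁ - v₂) = w := by
      have h₁ : A₁ *ᵥ v₁ = y := by
        rw [hv₁, Matrix.mulVec_mulVec, Matrix.mul_nonsing_inv _ hdet₁, Matrix.one_mulVec]
      have hAs : A₂ - A₁ = X * (D₂ - D₁) * Xᵀ := by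
        rw [hA₁def, hA₂def, Matrix.mul_sub, Matrix.sub_mul]
        abel
      rw [Matrix.mulVec_sub, h₁, ← hA₂v₂, ← Matrix.sub_mulVec, hAs, hw]
    rw [← hA₁vd, Matrix.mulVec_mulVec, Matrix.nonsing_inv_mul _ hdet₁, Matrix.one_mulVec]
  set sd : ℝ := ∑ i, ((v₁ - v₂) i) ^ 2 with hsd
  have hsdnn : 0 ≤ sd := Finset.sum_nonneg fun i _ => sq_nonneg _
  -- bound on sd
  have hSw : ∑ i, (w i) ^ 2 ≤ (n : ℝ) ^ 2 * (F2 * s₂) := by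
    have e1 : w = X *ᵥ ((D₂ - D₁) *ᵥ (Xᵀ *ᵥ v₂)) := by
      rw [hw, ← Matrix.mulVec_mulVec, ← Matrix.mulVec_mulVec]
    have hDsq : ∑ i, ∑ j, ((D₂ - D₁) i j) ^ 2 = F2 := by
      rw [hF2]
      refine Finset.sum_congr rfl fun i _ => Finset.sum_congr rfl fun j _ => ?_
      have : (D₂ - D₁) i j = -((D₁ - D₂) i j) := by simp [Matrix.sub_apply]
      rw [this]; ring
    have b1 : ∑ i, ((Xᵀ *ᵥ v₂) i) ^ 2 ≤ (n : ℝ) * s₂ := by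
      calc ∑ i, ((Xᵀ *ᵥ v₂) i) ^ 2
          ≤ (∑ i, ∑ j, ((Xᵀ) i j) ^ 2) * s₂ := sumsq_mulVec_le _ _
        _ ≤ (n : ℝ) * s₂ := by rw [hFXT]; exact mul_le_mul_of_nonneg_right hFX hs₂nn
    have b2 : ∑ i, (((D₂ - D₁) *ᵥ (Xᵀ *ᵥ v₂)) i) ^ 2 ≤ F2 * ((n : ℝ) * s₂) := by
      calc ∑ i, (((D₂ - D₁) *ᵥ (Xᵀ *ᵥ v₂)) i) ^ 2
          ≤ (∑ i, ∑ j, ((D₂ - D₁) i j) ^ 2) * ∑ i, ((Xᵀ *ᵥ v₂) i) ^ 2 :=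
            sumsq_mulVec_le _ _
        _ = F2 * ∑ i, ((Xᵀ *ᵥ v₂) i) ^ 2 := by rw [hDsq]
        _ ≤ F2 * ((n : ℝ) * s₂) := mul_le_mul_of_nonneg_left b1 hF2nn
    calc ∑ i, (w i) ^ 2
        = ∑ i, ((X *ᵥ ((D₂ - D₁) *ᵥ (Xᵀ *ᵥ v₂))) i) ^ 2 := by rw [e1]
      _ ≤ (∑ i, ∑ j, (X i j) ^ 2) * ∑ i, (((D₂ - D₁) *ᵥ (Xᵀ *ᵥ v₂)) i) ^ 2 :=
          sumsq_mulVec_le _ _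
      _ ≤ (n : ℝ) * (F2 * ((n : ℝ) * s₂)) := by
          exact mul_le_mul hFX b2 (Finset.sum_nonneg fun i _ => sq_nonneg _) (le_of_lt hn')
      _ = (n : ℝ) ^ 2 * (F2 * s₂) := by ring
  have hsdb : (n : ℝ) ^ 2 * sd ≤ (n : ℝ) ^ 2 * (F2 * s₂) := by
    have := hcontract D₁ h1 hdet₁ w
    rw [← hA₁def, ← hvd, ← hsd] at this
    exact le_trans this hSw
  have hsdb' : sd ≤ F2 * s₂ := by
    have hn2 : (0:ℝ) < (n : ℝ) ^ 2 := pow_pos hn' 2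
    exact le_of_mul_le_mul_left hsdb hn2
  -- difference of L values
  have hLd : L D₁ - L D₂ = (n : ℝ) * ∑ i, (v₁ i + v₂ i) * (v₁ i - v₂ i) := by
    rw [hL D₁, hL D₂, ← hA₁def, ← hA₂def, ← hv₁, ← hv₂, ← hs₁, ← hs₂, ← mul_sub]
    congr 1
    rw [hs₁, hs₂, ← Finset.sum_sub_distrib]
    exact Finset.sum_congr rfl fun i _ => by ring
  -- combine
  have hsp : ∑ i, (v₁ i + v₂ i) ^ 2 ≤ 2 * s₁ + 2 * s₂ := by
    rw [hs₁, hs₂, Finset.mul_sum, Finset.mul_sum, ← Finset.sum_add_distrib]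
    exact Finset.sum_le_sum fun i _ => by nlinarith [sq_nonneg (v₁ i - v₂ i)]
  have hcs2 : (∑ i, (v₁ i + v₂ i) * (v₁ i - v₂ i)) ^ 2
      ≤ (∑ i, (v₁ i + v₂ i) ^ 2) * sd := by
    have := Finset.sum_mul_sq_le_sq_mul_sq Finset.univ (fun i => v₁ i + v₂ i)
      (fun i => v₁ i - v₂ i)
    simpa [hsd] using this
  have key : (L D₁ - L D₂) ^ 2 ≤ (2 * frobNorm (D₁ - D₂)) ^ 2 := by
    have hfrobsq : (2 * frobNorm (D₁ - D₂)) ^ 2 = 4 * F2 := by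
      rw [mul_pow, frobNorm, Real.sq_sqrt hF2nn]; ring
    rw [hfrobsq, hLd, mul_pow]
    calc (n : ℝ) ^ 2 * (∑ i, (v₁ i + v₂ i) * (v₁ i - v₂ i)) ^ 2
        ≤ (n : ℝ) ^ 2 * ((2 * s₁ + 2 * s₂) * (F2 * s₂)) := by
          refine mul_le_mul_of_nonneg_left ?_ (sq_nonneg _)
          calc (∑ i, (v₁ i + v₂ i) * (v₁ i - v₂ i)) ^ 2
              ≤ (∑ i, (v₁ i + v₂ i) ^ 2) * sd := hcs2
            _ ≤ (2 * s₁ + 2 * s₂) * (F2 * s₂) := by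
                exact mul_le_mul hsp hsdb' hsdnn (by linarith [mul_nonneg hn'.le hs₁nn, mul_nonneg hn'.le hs₂nn])
      _ = ((n : ℝ) * (2 * s₁ + 2 * s₂)) * ((n : ℝ) * s₂) * F2 := by ring
      _ ≤ 4 * 1 * F2 := by
          have h4 : (n : ℝ) * (2 * s₁ + 2 * s₂) ≤ 4 := by nlinarith
          refine mul_le_mul_of_nonneg_right ?_ hF2nn
          exact mul_le_mul h4 hns₂ (mul_nonneg hn'.le hs₂nn) (by norm_num)
      _ = 4 * F2 := by ring
  calc |L D₁ - L D₂| = Real.sqrt ((L D₁ - L D₂) ^ 2) := (Real.sqrt_sq_eq_abs _).symm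
    _ ≤ Real.sqrt ((2 * frobNorm (D₁ - D₂)) ^ 2) := Real.sqrt_le_sqrt key
    _ = 2 * frobNorm (D₁ - D₂) := Real.sqrt_sq (mul_nonneg (by norm_num) hfrobnn)
end

section
/- Let X ∈ ℝ^{n×d} with rows of norm at most 1 and y ∈ [0,1]ⁿ, and set M(D) = XDXᵀ + nI. Define ∇L(D) = −n Xᵀ M(D)⁻¹ (y yᵀ M(D)⁻¹ + M(D)⁻¹ y yᵀ) M(D)⁻¹ X. Then for all positive semidefinite D₁, D₂, ‖∇L(D₁) − ∇L(D₂)‖_F ≤ 6 ‖D₁ − D₂‖_F. -/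
open Matrix Finset MeasureTheory

noncomputable def vnorm {m : ℕ} (v : Fin m → ℝ) : ℝ := Real.sqrt (∑ i, v i ^ 2)

lemma vnorm_nonneg {m : ℕ} (v : Fin m → ℝ) : 0 ≤ vnorm v := Real.sqrt_nonneg _

lemma vnorm_sq {m : ℕ} (v : Fin m → ℝ) : vnorm v ^ 2 = ∑ i, v i ^ 2 :=
  Real.sq_sqrt (by positivity)

lemma cs_dot {m : ℕ} (v w : Fin m → ℝ) : ∑ i, v i * w i ≤ vnorm v * vnorm w := by
  have h := Finset.sum_mul_sq_le_sq_mul_sq Finset.univ v w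
  have h2 : (∑ i, v i * w i) ^ 2 ≤ (vnorm v * vnorm w) ^ 2 := by
    rw [mul_pow, vnorm_sq, vnorm_sq]; exact h
  have h3 : ∑ i, v i * w i ≤ |∑ i, v i * w i| := le_abs_self _
  have h4 : |∑ i, v i * w i| ≤ vnorm v * vnorm w := by
    rw [← Real.sqrt_sq_eq_abs]
    rw [show vnorm v * vnorm w = Real.sqrt ((vnorm v * vnorm w)^2) from
      (Real.sqrt_sq (mul_nonneg (vnorm_nonneg _) (vnorm_nonneg _))).symm]
    exact Real.sqrt_le_sqrt h2
  exact le_trans h3 h4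

def Bnd {m k : ℕ} (A : Matrix (Fin m) (Fin k) ℝ) (c : ℝ) : Prop :=
  0 ≤ c ∧ ∀ v, vnorm (A.mulVec v) ≤ c * vnorm v

lemma Bnd.mul {m k l : ℕ} {A : Matrix (Fin m) (Fin k) ℝ} {B : Matrix (Fin k) (Fin l) ℝ}
    {a b : ℝ} (hA : Bnd A a) (hB : Bnd B b) : Bnd (A * B) (a * b) := by
  refine ⟨mul_nonneg hA.1 hB.1, fun v => ?_⟩
  rw [← mulVec_mulVec]
  calc vnorm (A.mulVec (B.mulVec v)) ≤ a * vnorm (B.mulVec v) := hA.2 _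
    _ ≤ a * (b * vnorm v) := by
        exact mul_le_mul_of_nonneg_left (hB.2 v) hA.1
    _ = a * b * vnorm v := by ring

lemma Bnd.mono {m k : ℕ} {A : Matrix (Fin m) (Fin k) ℝ} {c c' : ℝ}
    (h : Bnd A c) (hcc : c ≤ c') : Bnd A c' :=
  ⟨le_trans h.1 hcc, fun v => le_trans (h.2 v) (mul_le_mul_of_nonneg_right hcc (vnorm_nonneg v))⟩

lemma frobNorm_nonneg {m k : ℕ} (A : Matrix (Fin m) (Fin k) ℝ) : 0 ≤ frobNorm A :=
  Real.sqrt_nonneg _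

lemma frobNorm_sq {m k : ℕ} (A : Matrix (Fin m) (Fin k) ℝ) :
    frobNorm A ^ 2 = ∑ i, ∑ j, (A i j) ^ 2 := Real.sq_sqrt (by positivity)

lemma bnd_frob {m k : ℕ} (A : Matrix (Fin m) (Fin k) ℝ) : Bnd A (frobNorm A) := by
  refine ⟨frobNorm_nonneg A, fun v => ?_⟩
  have key : ∑ i, (A.mulVec v i) ^ 2 ≤ (∑ i, ∑ j, (A i j)^2) * (∑ j, v j ^ 2) := by
    rw [Finset.sum_mul]
    refine Finset.sum_le_sum fun i _ => ?_
    exact Finset.sum_mul_sq_le_sq_mul_sq Finset.univ (fun j => A i j) v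
  have : vnorm (A.mulVec v) ≤ Real.sqrt ((∑ i, ∑ j, (A i j)^2) * (∑ j, v j ^ 2)) := by
    unfold vnorm Matrix.mulVec
    exact Real.sqrt_le_sqrt key
  rwa [Real.sqrt_mul (by positivity)] at this

lemma frobNorm_transpose {m k : ℕ} (A : Matrix (Fin m) (Fin k) ℝ) :
    frobNorm Aᵀ = frobNorm A := by
  unfold frobNorm
  rw [Finset.sum_comm]
  rfl

lemma frob_mul_left {m k l : ℕ} {A : Matrix (Fin m) (Fin k) ℝ} {B : Matrix (Fin k) (Fin l) ℝ}
    {c : ℝ} (h : Bnd A c) : frobNorm (A * B) ≤ c * frobNorm B := by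
  have key : ∑ i, ∑ j, ((A * B) i j)^2 ≤ c^2 * ∑ k', ∑ j, (B k' j)^2 := by
    rw [Finset.sum_comm (s := (Finset.univ : Finset (Fin m)))]
    have : ∀ j : Fin l, ∑ i, ((A * B) i j)^2 ≤ c^2 * ∑ k', (B k' j)^2 := by
      intro j
      have hv := h.2 (fun k' => B k' j)
      have hcols : (fun i => (A * B) i j) = A.mulVec (fun k' => B k' j) := by
        funext i
        simp [Matrix.mul_apply, Matrix.mulVec, dotProduct]
      have this2 : vnorm (fun i => (A * B) i j) ≤ c * vnorm (fun k' => B k' j) := by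
        rw [hcols]; exact hv
      have hsq := mul_le_mul this2 this2 (vnorm_nonneg _)
        (mul_nonneg h.1 (vnorm_nonneg _))
      rw [← pow_two, ← pow_two] at hsq
      rw [mul_pow, vnorm_sq, vnorm_sq] at hsq
      exact hsq
    calc ∑ j, ∑ i, ((A * B) i j)^2 ≤ ∑ j, (c^2 * ∑ k', (B k' j)^2) :=
          Finset.sum_le_sum fun j _ => this j
      _ = c^2 * ∑ j, ∑ k', (B k' j)^2 := by rw [Finset.mul_sum]
      _ = c^2 * ∑ k', ∑ j, (B k' j)^2 := by rw [Finset.sum_comm]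
  have : frobNorm (A * B) ≤ Real.sqrt (c^2 * ∑ k', ∑ j, (B k' j)^2) :=
    Real.sqrt_le_sqrt key
  rwa [Real.sqrt_mul (by positivity), Real.sqrt_sq h.1] at this

lemma frob_mul_right {m k l : ℕ} {A : Matrix (Fin m) (Fin k) ℝ} {B : Matrix (Fin k) (Fin l) ℝ}
    {c : ℝ} (h : Bnd Bᵀ c) : frobNorm (A * B) ≤ frobNorm A * c := by
  have : frobNorm (A * B) = frobNorm (Bᵀ * Aᵀ) := by
    rw [← Matrix.transpose_mul, frobNorm_transpose]
  rw [this]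
  calc frobNorm (Bᵀ * Aᵀ) ≤ c * frobNorm Aᵀ := frob_mul_left h
    _ = frobNorm A * c := by rw [frobNorm_transpose]; ring

lemma frob_sandwich {p q r t : ℕ} {L : Matrix (Fin p) (Fin q) ℝ} {Δ : Matrix (Fin q) (Fin r) ℝ}
    {R : Matrix (Fin r) (Fin t) ℝ}
    {a b : ℝ} (hL : Bnd L a) (hR : Bnd Rᵀ b) :
    frobNorm (L * Δ * R) ≤ a * b * frobNorm Δ := by
  calc frobNorm (L * Δ * R) ≤ frobNorm (L * Δ) * b := frob_mul_right hR
    _ ≤ (a * frobNorm Δ) * b :=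
        mul_le_mul_of_nonneg_right (frob_mul_left hL) hR.1
    _ = a * b * frobNorm Δ := by ring

section FrobInstance
attribute [local instance] Matrix.frobeniusSeminormedAddCommGroup Matrix.frobeniusNormedSpace

lemma frob_eq_norm {m k : ℕ} (A : Matrix (Fin m) (Fin k) ℝ) : frobNorm A = ‖A‖ := by
  rw [Matrix.frobenius_norm_def, ← Real.sqrt_eq_rpow]
  unfold frobNorm
  congr 1
  refine Finset.sum_congr rfl fun i _ => Finset.sum_congr rfl fun j _ => ?_
  rw [show ((2:ℝ)) = ((2:ℕ):ℝ) by norm_num, Real.rpow_natCast, Real.norm_eq_abs, sq_abs]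

lemma frob_add_le {m k : ℕ} (A B : Matrix (Fin m) (Fin k) ℝ) :
    frobNorm (A + B) ≤ frobNorm A + frobNorm B := by
  rw [frob_eq_norm, frob_eq_norm, frob_eq_norm]; exact norm_add_le A B

lemma frob_smul {m k : ℕ} (r : ℝ) (A : Matrix (Fin m) (Fin k) ℝ) :
    frobNorm (r • A) = |r| * frobNorm A := by
  rw [frob_eq_norm, frob_eq_norm, norm_smul, Real.norm_eq_abs]

lemma frob_sub_rev {m k : ℕ} (A B : Matrix (Fin m) (Fin k) ℝ) :
    frobNorm (A - B) = frobNorm (B - A) := by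
  rw [frob_eq_norm, frob_eq_norm]; exact norm_sub_rev A B

end FrobInstance

lemma diff_identity {n d : ℕ} (X : Matrix (Fin n) (Fin d) ℝ)
    (A₁ A₂ Y : Matrix (Fin n) (Fin n) ℝ) :
    Xᵀ * A₁ * (Y * A₁ + A₁ * Y) * A₁ * X - Xᵀ * A₂ * (Y * A₂ + A₂ * Y) * A₂ * X
    = Xᵀ * ((A₁ - A₂) * Y * A₁ * A₁ + A₂ * Y * (A₁ - A₂) * A₁ + A₂ * Y * A₂ * (A₁ - A₂)
      + (A₁ - A₂) * A₁ * Y * A₁ + A₂ * (A₁ - A₂) * Y * A₁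
      + A₂ * A₂ * Y * (A₁ - A₂)) * X := by
  simp only [Matrix.sub_mul, Matrix.mul_sub, Matrix.add_mul, Matrix.mul_add, Matrix.mul_assoc]
  abel

lemma sandwich_identity {n d : ℕ} (X : Matrix (Fin n) (Fin d) ℝ)
    (A₁ A₂ Y : Matrix (Fin n) (Fin n) ℝ) (Δ : Matrix (Fin d) (Fin d) ℝ) :
    Xᵀ * ((A₂ * (X * Δ * Xᵀ) * A₁) * Y * A₁ * A₁ + A₂ * Y * (A₂ * (X * Δ * Xᵀ) * A₁) * A₁
      + A₂ * Y * A₂ * (A₂ * (X * Δ * Xᵀ) * A₁) + (A₂ * (X * Δ * Xᵀ) * A₁) * A₁ * Y * A₁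
      + A₂ * (A₂ * (X * Δ * Xᵀ) * A₁) * Y * A₁
      + A₂ * A₂ * Y * (A₂ * (X * Δ * Xᵀ) * A₁)) * X
    = (Xᵀ * A₂ * X) * Δ * (Xᵀ * A₁ * Y * A₁ * A₁ * X)
    + (Xᵀ * A₂ * Y * A₂ * X) * Δ * (Xᵀ * A₁ * A₁ * X)
    + (Xᵀ * A₂ * Y * A₂ * A₂ * X) * Δ * (Xᵀ * A₁ * X)
    + (Xᵀ * A₂ * X) * Δ * (Xᵀ * A₁ * A₁ * Y * A₁ * X)
    + (Xᵀ * A₂ * A₂ * X) * Δ * (Xᵀ * A₁ * Y * A₁ * X)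
    + (Xᵀ * A₂ * A₂ * Y * A₂ * X) * Δ * (Xᵀ * A₁ * X) := by
  simp only [Matrix.add_mul, Matrix.mul_add, Matrix.mul_assoc]

set_option maxHeartbeats 1000000 in
theorem stmt8 {n d : ℕ} (X : Matrix (Fin n) (Fin d) ℝ) (y : Fin n → ℝ)
    (hX : ∀ i, ∑ j, (X i j) ^ 2 ≤ 1) (hy : ∀ i, y i ∈ Set.Icc (0:ℝ) 1)
    (M : Matrix (Fin d) (Fin d) ℝ → Matrix (Fin n) (Fin n) ℝ)
    (hM : ∀ D, M D = X * D * Xᵀ + (n : ℝ) • (1 : Matrix (Fin n) (Fin n) ℝ))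
    (gradL : Matrix (Fin d) (Fin d) ℝ → Matrix (Fin d) (Fin d) ℝ)
    (hgrad : ∀ D, gradL D = (-(n : ℝ)) •
      (Xᵀ * (M D)⁻¹ * (Matrix.vecMulVec y y * (M D)⁻¹ + (M D)⁻¹ * Matrix.vecMulVec y y)
        * (M D)⁻¹ * X))
    (D₁ D₂ : Matrix (Fin d) (Fin d) ℝ) (h1 : D₁.PosSemidef) (h2 : D₂.PosSemidef) :
    frobNorm (gradL D₁ - gradL D₂) ≤ 6 * frobNorm (D₁ - D₂) := by
  rcases Nat.eq_zero_or_pos n with hn | hn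
  · subst hn
    have : gradL D₁ - gradL D₂ = 0 := by
      rw [hgrad, hgrad]
      simp
    rw [this]
    have h0 : frobNorm (0 : Matrix (Fin d) (Fin d) ℝ) = 0 := by
      simp [frobNorm]
    rw [h0]
    exact mul_nonneg (by norm_num) (frobNorm_nonneg _)
  · have hn0 : (0:ℝ) < n := by exact_mod_cast hn
    set s := Real.sqrt (n : ℝ) with hs_def
    have hs : s * s = n := Real.mul_self_sqrt hn0.le
    have hs0 : 0 ≤ s := Real.sqrt_nonneg _
    -- Frobenius bound on X
    have hfX : frobNorm X ≤ s := by
      have h1' : (∑ i, ∑ j, (X i j)^2) ≤ (n:ℝ) := by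
        calc ∑ i, ∑ j, (X i j)^2 ≤ ∑ _i : Fin n, (1:ℝ) :=
              Finset.sum_le_sum fun i _ => hX i
          _ = n := by simp
      unfold frobNorm
      rw [hs_def]
      exact Real.sqrt_le_sqrt h1'
    have BndX : Bnd X s := (bnd_frob X).mono hfX
    have BndXt : Bnd Xᵀ s := (bnd_frob Xᵀ).mono (by rw [frobNorm_transpose]; exact hfX)
    -- bound on Y = y yᵀ
    set Y := Matrix.vecMulVec y y with hY_def
    have hsumy : ∑ i, (y i)^2 ≤ (n : ℝ) := by
      calc ∑ i, (y i)^2 ≤ ∑ _i : Fin n, (1:ℝ) := by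
            refine Finset.sum_le_sum fun i _ => ?_
            have := hy i
            nlinarith [this.1, this.2]
        _ = n := by simp
    have hfY : frobNorm Y ≤ (n : ℝ) := by
      have : frobNorm Y = ∑ i, (y i)^2 := by
        unfold frobNorm
        have : ∀ i j : Fin n, (Y i j)^2 = (y i)^2 * (y j)^2 := by
          intro i j; rw [hY_def, Matrix.vecMulVec_apply]; ring
        rw [show (∑ i, ∑ j, (Y i j)^2) = (∑ i, (y i)^2) * (∑ j, (y j)^2) by
          rw [Finset.sum_mul_sum]; exact Finset.sum_congr rfl fun i _ =>
            Finset.sum_congr rfl fun j _ => this i j]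
        exact Real.sqrt_mul_self (by positivity)
      rw [this]; exact hsumy
    have BndY : Bnd Y (n : ℝ) := (bnd_frob Y).mono hfY
    have hYt : Yᵀ = Y := by
      rw [hY_def]; ext i j; simp [Matrix.vecMulVec_apply]; ring
    -- properties of M D for PSD D
    have hMfact : ∀ D : Matrix (Fin d) (Fin d) ℝ, D.PosSemidef →
        ((M D)ᵀ = M D) ∧ IsUnit (M D).det ∧ Bnd (M D)⁻¹ (1/(n:ℝ)) := by
      intro D hD
      have hDt : Dᵀ = D := by
        rw [← Matrix.conjTranspose_eq_transpose_of_trivial]; exact hD.1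
      have hMt : (M D)ᵀ = M D := by
        rw [hM]
        rw [Matrix.transpose_add, Matrix.transpose_smul, Matrix.transpose_one,
          Matrix.transpose_mul, Matrix.transpose_mul, Matrix.transpose_transpose, hDt,
          Matrix.mul_assoc]
      have hpsd : (X * D * Xᵀ).PosSemidef := by
        have := hD.mul_mul_conjTranspose_same X
        rwa [Matrix.conjTranspose_eq_transpose_of_trivial] at this
      have quad : ∀ v : Fin n → ℝ, (n:ℝ) * ∑ i, (v i)^2 ≤ v ⬝ᵥ (M D).mulVec v := by
        intro v
        rw [hM, Matrix.add_mulVec, dotProduct_add, Matrix.smul_mulVec,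
          Matrix.one_mulVec]
        have h1' : 0 ≤ v ⬝ᵥ (X * D * Xᵀ).mulVec v := by
          have := hpsd.dotProduct_mulVec_nonneg v
          simpa using this
        have h2' : v ⬝ᵥ ((n:ℝ) • v) = (n:ℝ) * ∑ i, (v i)^2 := by
          simp [dotProduct, Finset.mul_sum]
          exact Finset.sum_congr rfl fun i _ => by ring
        linarith [h1', h2'.ge, h2'.le]
      have hpd : (M D).PosDef := by
        refine Matrix.posDef_iff_dotProduct_mulVec.mpr ⟨?_, fun x hx => ?_⟩
        · rw [Matrix.IsHermitian, Matrix.conjTranspose_eq_transpose_of_trivial]; exact hMt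
        · have hxs : 0 < ∑ i, (x i)^2 := by
            obtain ⟨i, hi⟩ := Function.ne_iff.mp hx
            refine Finset.sum_pos' (fun j _ => sq_nonneg _) ⟨i, Finset.mem_univ i, ?_⟩
            have : x i ≠ 0 := hi
            positivity
          have hq := quad x
          have : 0 < x ⬝ᵥ (M D).mulVec x := lt_of_lt_of_le (mul_pos hn0 hxs) hq
          simpa using this
      have hdet : IsUnit (M D).det := (Matrix.isUnit_iff_isUnit_det _).mp hpd.isUnit
      refine ⟨hMt, hdet, ⟨by positivity, fun v => ?_⟩⟩
      set w := (M D)⁻¹.mulVec v with hw_def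
      have hMw : (M D).mulVec w = v := by
        rw [hw_def, Matrix.mulVec_mulVec, Matrix.mul_nonsing_inv _ hdet, Matrix.one_mulVec]
      have key : (n:ℝ) * vnorm w ^ 2 ≤ vnorm w * vnorm v := by
        rw [vnorm_sq]
        calc (n:ℝ) * ∑ i, (w i)^2 ≤ w ⬝ᵥ (M D).mulVec w := quad w
          _ = ∑ i, w i * v i := by rw [hMw]; rfl
          _ ≤ vnorm w * vnorm v := cs_dot w v
      rcases (vnorm_nonneg w).lt_or_eq with hw0 | hw0
      · have : (n:ℝ) * vnorm w ≤ vnorm v := by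
          nlinarith [key, hw0]
        rw [div_mul_eq_mul_div, le_div_iff₀ hn0]
        nlinarith [this]
      · rw [← hw0]
        exact mul_nonneg (by positivity) (vnorm_nonneg v)
    obtain ⟨hMt1, hdet1, BndA1⟩ := hMfact D₁ h1
    obtain ⟨hMt2, hdet2, BndA2⟩ := hMfact D₂ h2
    set A₁ := (M D₁)⁻¹ with hA1_def
    set A₂ := (M D₂)⁻¹ with hA2_def
    have hA1t : A₁ᵀ = A₁ := by
      rw [hA1_def, Matrix.transpose_nonsing_inv, hMt1]
    have hA2t : A₂ᵀ = A₂ := by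
      rw [hA2_def, Matrix.transpose_nonsing_inv, hMt2]
    set Δ := D₂ - D₁ with hΔ_def
    have hE : A₁ - A₂ = A₂ * (X * Δ * Xᵀ) * A₁ := by
      have h21 : M D₂ - M D₁ = X * Δ * Xᵀ := by
        rw [hM, hM, hΔ_def, Matrix.mul_sub, Matrix.sub_mul]
        abel
      have : A₂ * (X * Δ * Xᵀ) * A₁ = A₂ * (M D₂ - M D₁) * A₁ := by rw [h21]
      rw [this]
      have expand : A₂ * (M D₂ - M D₁) * A₁ = (A₂ * M D₂) * A₁ - A₂ * (M D₁ * A₁) := by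
        noncomm_ring
      rw [expand, Matrix.nonsing_inv_mul _ hdet2, Matrix.mul_nonsing_inv _ hdet1,
        Matrix.one_mul, Matrix.mul_one]
    -- numeric chain bounds
    have hinv : (0:ℝ) ≤ 1/(n:ℝ) := by positivity
    have hne : (n:ℝ) ≠ 0 := hn0.ne'
    have e1 : s * (1/(n:ℝ)) * s ≤ 1 := by
      refine le_of_eq ?_
      rw [show s * (1/(n:ℝ)) * s = (s*s) * (1/(n:ℝ)) from by ring, hs]
      field_simp
    have e2 : s * (1/(n:ℝ)) * (1/(n:ℝ)) * s ≤ 1/(n:ℝ) := by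
      refine le_of_eq ?_
      rw [show s * (1/(n:ℝ)) * (1/(n:ℝ)) * s = (s*s) * (1/(n:ℝ)) * (1/(n:ℝ)) from by ring, hs]
      field_simp
    have e3 : s * (1/(n:ℝ)) * (n:ℝ) * (1/(n:ℝ)) * s ≤ 1 := by
      refine le_of_eq ?_
      rw [show s * (1/(n:ℝ)) * (n:ℝ) * (1/(n:ℝ)) * s
        = (s*s) * (n:ℝ) * (1/(n:ℝ)) * (1/(n:ℝ)) from by ring, hs]
      field_simp
    have e4 : s * (1/(n:ℝ)) * (n:ℝ) * (1/(n:ℝ)) * (1/(n:ℝ)) * s ≤ 1/(n:ℝ) := by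
      refine le_of_eq ?_
      rw [show s * (1/(n:ℝ)) * (n:ℝ) * (1/(n:ℝ)) * (1/(n:ℝ)) * s
        = (s*s) * (n:ℝ) * (1/(n:ℝ)) * (1/(n:ℝ)) * (1/(n:ℝ)) from by ring, hs]
      field_simp
    have e5 : s * (1/(n:ℝ)) * (1/(n:ℝ)) * (n:ℝ) * (1/(n:ℝ)) * s ≤ 1/(n:ℝ) := by
      refine le_of_eq ?_
      rw [show s * (1/(n:ℝ)) * (1/(n:ℝ)) * (n:ℝ) * (1/(n:ℝ)) * s
        = (s*s) * (n:ℝ) * (1/(n:ℝ)) * (1/(n:ℝ)) * (1/(n:ℝ)) from by ring, hs]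
      field_simp
    -- Bnd of chains
    have BndL1 : Bnd (Xᵀ * A₂ * X) 1 := ((BndXt.mul BndA2).mul BndX).mono e1
    have BndL2 : Bnd (Xᵀ * A₂ * Y * A₂ * X) 1 :=
      ((((BndXt.mul BndA2).mul BndY).mul BndA2).mul BndX).mono e3
    have BndL3 : Bnd (Xᵀ * A₂ * Y * A₂ * A₂ * X) (1/(n:ℝ)) :=
      (((((BndXt.mul BndA2).mul BndY).mul BndA2).mul BndA2).mul BndX).mono e4
    have BndL5 : Bnd (Xᵀ * A₂ * A₂ * X) (1/(n:ℝ)) :=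
      (((BndXt.mul BndA2).mul BndA2).mul BndX).mono e2
    have BndL6 : Bnd (Xᵀ * A₂ * A₂ * Y * A₂ * X) (1/(n:ℝ)) :=
      (((((BndXt.mul BndA2).mul BndA2).mul BndY).mul BndA2).mul BndX).mono e5
    have BndR0 : Bnd (Xᵀ * A₁ * X) 1 := ((BndXt.mul BndA1).mul BndX).mono e1
    have BndR1 : Bnd (Xᵀ * A₁ * A₁ * Y * A₁ * X) (1/(n:ℝ)) :=
      (((((BndXt.mul BndA1).mul BndA1).mul BndY).mul BndA1).mul BndX).mono e5
    have BndR2 : Bnd (Xᵀ * A₁ * A₁ * X) (1/(n:ℝ)) :=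
      (((BndXt.mul BndA1).mul BndA1).mul BndX).mono e2
    have BndR4 : Bnd (Xᵀ * A₁ * Y * A₁ * A₁ * X) (1/(n:ℝ)) :=
      (((((BndXt.mul BndA1).mul BndY).mul BndA1).mul BndA1).mul BndX).mono e4
    have BndR5 : Bnd (Xᵀ * A₁ * Y * A₁ * X) 1 :=
      ((((BndXt.mul BndA1).mul BndY).mul BndA1).mul BndX).mono e3
    -- transposes of right chains
    have hRt1 : (Xᵀ * A₁ * Y * A₁ * A₁ * X)ᵀ = Xᵀ * A₁ * A₁ * Y * A₁ * X := by
      simp [Matrix.transpose_mul, hA1t, hYt, Matrix.mul_assoc]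
    have hRt2 : (Xᵀ * A₁ * A₁ * X)ᵀ = Xᵀ * A₁ * A₁ * X := by
      simp [Matrix.transpose_mul, hA1t, Matrix.mul_assoc]
    have hRt0 : (Xᵀ * A₁ * X)ᵀ = Xᵀ * A₁ * X := by
      simp [Matrix.transpose_mul, hA1t, Matrix.mul_assoc]
    have hRt4 : (Xᵀ * A₁ * A₁ * Y * A₁ * X)ᵀ = Xᵀ * A₁ * Y * A₁ * A₁ * X := by
      simp [Matrix.transpose_mul, hA1t, hYt, Matrix.mul_assoc]
    have hRt5 : (Xᵀ * A₁ * Y * A₁ * X)ᵀ = Xᵀ * A₁ * Y * A₁ * X := by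
      simp [Matrix.transpose_mul, hA1t, hYt, Matrix.mul_assoc]
    -- main identity
    have key : gradL D₁ - gradL D₂ = (-(n:ℝ)) • (
        (Xᵀ * A₂ * X) * Δ * (Xᵀ * A₁ * Y * A₁ * A₁ * X)
      + (Xᵀ * A₂ * Y * A₂ * X) * Δ * (Xᵀ * A₁ * A₁ * X)
      + (Xᵀ * A₂ * Y * A₂ * A₂ * X) * Δ * (Xᵀ * A₁ * X)
      + (Xᵀ * A₂ * X) * Δ * (Xᵀ * A₁ * A₁ * Y * A₁ * X)
      + (Xᵀ * A₂ * A₂ * X) * Δ * (Xᵀ * A₁ * Y * A₁ * X)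
      + (Xᵀ * A₂ * A₂ * Y * A₂ * X) * Δ * (Xᵀ * A₁ * X)) := by
      rw [hgrad, hgrad, ← hA1_def, ← hA2_def, ← smul_sub]
      congr 1
      rw [diff_identity, hE, sandwich_identity]
    -- transposed Bnd facts
    have BndR4t : Bnd ((Xᵀ * A₁ * Y * A₁ * A₁ * X)ᵀ) (1/(n:ℝ)) := by rw [hRt1]; exact BndR1
    have BndR2t : Bnd ((Xᵀ * A₁ * A₁ * X)ᵀ) (1/(n:ℝ)) := by rw [hRt2]; exact BndR2
    have BndR0t : Bnd ((Xᵀ * A₁ * X)ᵀ) 1 := by rw [hRt0]; exact BndR0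
    have BndR1t : Bnd ((Xᵀ * A₁ * A₁ * Y * A₁ * X)ᵀ) (1/(n:ℝ)) := by rw [hRt4]; exact BndR4
    have BndR5t : Bnd ((Xᵀ * A₁ * Y * A₁ * X)ᵀ) 1 := by rw [hRt5]; exact BndR5
    -- term bounds
    have h1' : frobNorm ((Xᵀ * A₂ * X) * Δ * (Xᵀ * A₁ * Y * A₁ * A₁ * X))
        ≤ 1/(n:ℝ) * frobNorm Δ := by
      have := frob_sandwich (Δ := Δ) BndL1 BndR4t
      calc _ ≤ 1 * (1/(n:ℝ)) * frobNorm Δ := this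
        _ = 1/(n:ℝ) * frobNorm Δ := by ring
    have h2' : frobNorm ((Xᵀ * A₂ * Y * A₂ * X) * Δ * (Xᵀ * A₁ * A₁ * X))
        ≤ 1/(n:ℝ) * frobNorm Δ := by
      have := frob_sandwich (Δ := Δ) BndL2 BndR2t
      calc _ ≤ 1 * (1/(n:ℝ)) * frobNorm Δ := this
        _ = 1/(n:ℝ) * frobNorm Δ := by ring
    have h3' : frobNorm ((Xᵀ * A₂ * Y * A₂ * A₂ * X) * Δ * (Xᵀ * A₁ * X))
        ≤ 1/(n:ℝ) * frobNorm Δ := by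
      have := frob_sandwich (Δ := Δ) BndL3 BndR0t
      calc _ ≤ (1/(n:ℝ)) * 1 * frobNorm Δ := this
        _ = 1/(n:ℝ) * frobNorm Δ := by ring
    have h4' : frobNorm ((Xᵀ * A₂ * X) * Δ * (Xᵀ * A₁ * A₁ * Y * A₁ * X))
        ≤ 1/(n:ℝ) * frobNorm Δ := by
      have := frob_sandwich (Δ := Δ) BndL1 BndR1t
      calc _ ≤ 1 * (1/(n:ℝ)) * frobNorm Δ := this
        _ = 1/(n:ℝ) * frobNorm Δ := by ring
    have h5' : frobNorm ((Xᵀ * A₂ * A₂ * X) * Δ * (Xᵀ * A₁ * Y * A₁ * X))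
        ≤ 1/(n:ℝ) * frobNorm Δ := by
      have := frob_sandwich (Δ := Δ) BndL5 BndR5t
      calc _ ≤ (1/(n:ℝ)) * 1 * frobNorm Δ := this
        _ = 1/(n:ℝ) * frobNorm Δ := by ring
    have h6' : frobNorm ((Xᵀ * A₂ * A₂ * Y * A₂ * X) * Δ * (Xᵀ * A₁ * X))
        ≤ 1/(n:ℝ) * frobNorm Δ := by
      have := frob_sandwich (Δ := Δ) BndL6 BndR0t
      calc _ ≤ (1/(n:ℝ)) * 1 * frobNorm Δ := this
        _ = 1/(n:ℝ) * frobNorm Δ := by ring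
    -- put together
    set T1 := (Xᵀ * A₂ * X) * Δ * (Xᵀ * A₁ * Y * A₁ * A₁ * X)
    set T2 := (Xᵀ * A₂ * Y * A₂ * X) * Δ * (Xᵀ * A₁ * A₁ * X)
    set T3 := (Xᵀ * A₂ * Y * A₂ * A₂ * X) * Δ * (Xᵀ * A₁ * X)
    set T4 := (Xᵀ * A₂ * X) * Δ * (Xᵀ * A₁ * A₁ * Y * A₁ * X)
    set T5 := (Xᵀ * A₂ * A₂ * X) * Δ * (Xᵀ * A₁ * Y * A₁ * X)
    set T6 := (Xᵀ * A₂ * A₂ * Y * A₂ * X) * Δ * (Xᵀ * A₁ * X)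
    have tri : frobNorm (T1 + T2 + T3 + T4 + T5 + T6)
        ≤ frobNorm T1 + frobNorm T2 + frobNorm T3 + frobNorm T4 + frobNorm T5 + frobNorm T6 := by
      calc frobNorm (T1 + T2 + T3 + T4 + T5 + T6)
          ≤ frobNorm (T1 + T2 + T3 + T4 + T5) + frobNorm T6 := frob_add_le _ _
        _ ≤ (frobNorm (T1 + T2 + T3 + T4) + frobNorm T5) + frobNorm T6 :=
            add_le_add_left (frob_add_le _ _) _
        _ ≤ ((frobNorm (T1 + T2 + T3) + frobNorm T4) + frobNorm T5) + frobNorm T6 :=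
            add_le_add_left (add_le_add_left (frob_add_le _ _) _) _
        _ ≤ (((frobNorm (T1 + T2) + frobNorm T3) + frobNorm T4) + frobNorm T5) + frobNorm T6 :=
            add_le_add_left (add_le_add_left (add_le_add_left (frob_add_le _ _) _) _) _
        _ ≤ ((((frobNorm T1 + frobNorm T2) + frobNorm T3) + frobNorm T4) + frobNorm T5)
              + frobNorm T6 :=
            add_le_add_left (add_le_add_left (add_le_add_left
              (add_le_add_left (frob_add_le _ _) _) _) _) _
    have habs : |(-(n:ℝ))| = (n:ℝ) := by
      rw [abs_neg, abs_of_nonneg hn0.le]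
    have hfinal : frobNorm (gradL D₁ - gradL D₂) ≤ (n:ℝ) * (6 * (1/(n:ℝ) * frobNorm Δ)) := by
      rw [key, frob_smul, habs]
      have hsum : frobNorm (T1 + T2 + T3 + T4 + T5 + T6) ≤ 6 * (1/(n:ℝ) * frobNorm Δ) := by
        linarith [tri, h1', h2', h3', h4', h5', h6']
      exact mul_le_mul_of_nonneg_left hsum hn0.le
    calc frobNorm (gradL D₁ - gradL D₂) ≤ (n:ℝ) * (6 * (1/(n:ℝ) * frobNorm Δ)) := hfinal
      _ = 6 * frobNorm Δ := by field_simp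
      _ = 6 * frobNorm (D₁ - D₂) := by rw [hΔ_def, frob_sub_rev]
end

section
/- The minimizer of w ↦ (1/n)‖y − Xw‖² + wᵀD†w over w ∈ Ran(D), where D is positive semidefinite, is given in closed form by w* = DXᵀ(XDXᵀ + nI)⁻¹ y. -/
open Matrix Finset MeasureTheory

private lemma aux_dot {m k : ℕ} (A : Matrix (Fin m) (Fin k) ℝ) (x : Fin k → ℝ)
    (z : Fin m → ℝ) : (A *ᵥ x) ⬝ᵥ z = x ⬝ᵥ (Aᵀ *ᵥ z) := by
  rw [dotProduct_mulVec, vecMul_transpose, dotProduct_comm]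

private lemma dot_self_nonneg {m : ℕ} (z : Fin m → ℝ) : 0 ≤ z ⬝ᵥ z := by
  exact Finset.sum_nonneg fun i _ => mul_self_nonneg _

theorem stmt9 {n d : ℕ} (hn : 1 ≤ n) (X : Matrix (Fin n) (Fin d) ℝ) (y : Fin n → ℝ)
    (D Dp : Matrix (Fin d) (Fin d) ℝ) (hD : D.PosSemidef)
    (hpinv1 : D * Dp * D = D) (hpinv2 : Dp * D * Dp = Dp)
    (hpinv3 : (D * Dp)ᵀ = D * Dp) (hpinv4 : (Dp * D)ᵀ = Dp * D)
    (f : (Fin d → ℝ) → ℝ)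
    (hf : ∀ w, f w = (1 / n : ℝ) * (∑ i, (y i - (X *ᵥ w) i) ^ 2) + w ⬝ᵥ (Dp *ᵥ w))
    (wstar : Fin d → ℝ)
    (hws : wstar = (D * Xᵀ) *ᵥ
      ((X * D * Xᵀ + (n : ℝ) • (1 : Matrix (Fin n) (Fin n) ℝ))⁻¹ *ᵥ y)) :
    wstar ∈ Set.range D.mulVec ∧ ∀ w ∈ Set.range D.mulVec, f wstar ≤ f w := by
  have hn0 : (0:ℝ) < n := by exact_mod_cast hn
  set M := X * D * Xᵀ + (n : ℝ) • (1 : Matrix (Fin n) (Fin n) ℝ) with hM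
  have hDt : Dᵀ = D := (by simpa using hD.1 : D.IsSymm).eq
  have h1 : (X * D * Xᵀ).PosSemidef := by simpa using hD.mul_mul_conjTranspose_same X
  have h2 : ((n:ℝ) • (1 : Matrix (Fin n) (Fin n) ℝ)).PosDef := by
    refine Matrix.posDef_iff_dotProduct_mulVec.mpr ⟨?_, ?_⟩
    · simp [Matrix.IsHermitian]
    · intro x hx
      simp only [smul_mulVec, one_mulVec, dotProduct_smul]
      have hp : 0 < star x ⬝ᵥ x := dotProduct_star_self_pos_iff.mpr hx
      simp only [star_trivial] at hp ⊢
      exact mul_pos hn0 hp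
  have hpd : M.PosDef := Matrix.PosDef.posSemidef_add h1 h2
  have hMinv : M * M⁻¹ = 1 := Matrix.mul_nonsing_inv M hpd.det_pos.ne'.isUnit
  set a : Fin n → ℝ := M⁻¹ *ᵥ y with ha
  have hMa : M *ᵥ a = y := by
    rw [ha, mulVec_mulVec, hMinv, one_mulVec]
  set t : Fin d → ℝ := Xᵀ *ᵥ a with ht
  have hws' : wstar = D *ᵥ t := by
    rw [hws, ← mulVec_mulVec, ht, ha]
  -- residual identity
  have hr : y - X *ᵥ (D *ᵥ t) = (n:ℝ) • a := by
    have step : M *ᵥ a = (X * D * Xᵀ) *ᵥ a + (n:ℝ) • a := by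
      rw [hM, add_mulVec, smul_mulVec, one_mulVec]
    have step2 : X *ᵥ (D *ᵥ t) = (X * D * Xᵀ) *ᵥ a := by
      rw [ht, mulVec_mulVec, mulVec_mulVec]
    rw [step2, ← hMa, step]
    abel
  -- penalty identity on range of D
  have hpen : ∀ v : Fin d → ℝ, (D *ᵥ v) ⬝ᵥ (Dp *ᵥ (D *ᵥ v)) = v ⬝ᵥ (D *ᵥ v) := by
    intro v
    rw [aux_dot, hDt, mulVec_mulVec, mulVec_mulVec, hpinv1]
  -- symmetry of D in dot products
  have hsym : ∀ u v : Fin d → ℝ, u ⬝ᵥ (D *ᵥ v) = v ⬝ᵥ (D *ᵥ u) := by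
    intro u v
    rw [dotProduct_comm, aux_dot, hDt]
  have hDnn : ∀ v : Fin d → ℝ, 0 ≤ v ⬝ᵥ (D *ᵥ v) := by
    intro v
    have := hD.dotProduct_mulVec_nonneg v
    simpa using this
  -- rewrite f on range of D
  have hfD : ∀ v : Fin d → ℝ, f (D *ᵥ v) =
      (1 / n : ℝ) * ((y - X *ᵥ (D *ᵥ v)) ⬝ᵥ (y - X *ᵥ (D *ᵥ v))) + v ⬝ᵥ (D *ᵥ v) := by
    intro v
    rw [hf, hpen]
    congr 1
    congr 1
    simp [dotProduct, sq]
  constructor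
  · exact ⟨t, hws'.symm⟩
  · rintro w ⟨s, rfl⟩
    show f wstar ≤ f (D *ᵥ s)
    rw [hws', hfD, hfD]
    set e := s - t with he
    have hse : s = t + e := by rw [he]; abel
    have hXe : y - X *ᵥ (D *ᵥ s) = (n:ℝ) • a - X *ᵥ (D *ᵥ e) := by
      rw [hse, ← hr]
      rw [show D *ᵥ (t + e) = D *ᵥ t + D *ᵥ e from mulVec_add D t e, mulVec_add]
      abel
    have hcross : a ⬝ᵥ (X *ᵥ (D *ᵥ e)) = t ⬝ᵥ (D *ᵥ e) := by
      rw [dotProduct_comm, aux_dot, dotProduct_comm, ht]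
    rw [hXe, hr]
    have expand1 : ((n:ℝ) • a - X *ᵥ (D *ᵥ e)) ⬝ᵥ ((n:ℝ) • a - X *ᵥ (D *ᵥ e)) =
        (n:ℝ)^2 * (a ⬝ᵥ a) - 2 * (n:ℝ) * (t ⬝ᵥ (D *ᵥ e))
          + (X *ᵥ (D *ᵥ e)) ⬝ᵥ (X *ᵥ (D *ᵥ e)) := by
      rw [sub_dotProduct, dotProduct_sub, dotProduct_sub, smul_dotProduct, smul_dotProduct,
        dotProduct_smul, dotProduct_smul, ← hcross, dotProduct_comm (X *ᵥ (D *ᵥ e)) a, hcross]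
      simp only [smul_eq_mul]
      ring
    have expand2 : ((n:ℝ) • a) ⬝ᵥ ((n:ℝ) • a) = (n:ℝ)^2 * (a ⬝ᵥ a) := by
      rw [smul_dotProduct, dotProduct_smul, smul_eq_mul, smul_eq_mul]; ring
    have expand3 : s ⬝ᵥ (D *ᵥ s) = t ⬝ᵥ (D *ᵥ t) + 2 * (t ⬝ᵥ (D *ᵥ e)) + e ⬝ᵥ (D *ᵥ e) := by
      rw [hse, mulVec_add, dotProduct_add, add_dotProduct, add_dotProduct,
        hsym e t]
      ring
    rw [expand1, expand2, expand3]
    have q1 : 0 ≤ (X *ᵥ (D *ᵥ e)) ⬝ᵥ (X *ᵥ (D *ᵥ e)) := dot_self_nonneg _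
    have q2 : 0 ≤ e ⬝ᵥ (D *ᵥ e) := hDnn e
    have h1n : 0 < (1 / n : ℝ) := by positivity
    have hq : (1/(n:ℝ)) * ((n:ℝ)^2 * (a ⬝ᵥ a) - 2*(n:ℝ)*(t ⬝ᵥ (D *ᵥ e))
          + (X *ᵥ (D *ᵥ e)) ⬝ᵥ (X *ᵥ (D *ᵥ e)))
        = (1/(n:ℝ)) * ((n:ℝ)^2 * (a ⬝ᵥ a)) - 2*(t ⬝ᵥ (D *ᵥ e))
          + (1/(n:ℝ)) * ((X *ᵥ (D *ᵥ e)) ⬝ᵥ (X *ᵥ (D *ᵥ e))) := by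
      field_simp
    rw [hq]
    linarith [mul_nonneg h1n.le q1, q2]
end

section
/- For any matrix W = [w₁,…,w_T] ∈ ℝ^{d×T} and λ > 0, the squared trace norm satisfies ‖W‖₁² = (1/λ) · inf over positive definite D with tr(D) < 1/λ of Σ_{t=1}^T wₜᵀ D⁻¹ wₜ. -/
open Matrix Finset MeasureTheory

/-- The square root of a positive semidefinite matrix, as `Matrix.PosSemidef.sqrt` was defined
in the older Mathlib (removed since), specialized to real matrices. -/
noncomputable def Matrix.PosSemidef.sqrt {n : Type*} [Fintype n] [DecidableEq n]
    {A : Matrix n n ℝ} (hA : A.PosSemidef) : Matrix n n ℝ :=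
  (hA.1.eigenvectorUnitary : Matrix n n ℝ) * diagonal (fun i => √(hA.1.eigenvalues i)) *
    (star hA.1.eigenvectorUnitary : Matrix n n ℝ)

section StmtAux

lemma psd_sqrt_mul_self {n : Type*} [Fintype n] [DecidableEq n]
    {A : Matrix n n ℝ} (hA : A.PosSemidef) : hA.sqrt * hA.sqrt = A := by
  have hU : (star hA.1.eigenvectorUnitary : Matrix n n ℝ) * (hA.1.eigenvectorUnitary : Matrix n n ℝ) = 1 :=
    Unitary.coe_star_mul_self _
  have hs := hA.1.spectral_theorem
  rw [Unitary.conjStarAlgAut_apply] at hs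
  unfold Matrix.PosSemidef.sqrt
  conv_rhs => rw [hs]
  simp only [Matrix.mul_assoc]
  rw [← Matrix.mul_assoc _ _ (diagonal _ * _), hU, Matrix.one_mul, ← Matrix.mul_assoc (diagonal _),
    diagonal_mul_diagonal]
  congr 3
  funext i
  simp [Real.mul_self_sqrt (hA.eigenvalues_nonneg i)]

lemma psd_sqrt_herm {n : Type*} [Fintype n] [DecidableEq n]
    {A : Matrix n n ℝ} (hA : A.PosSemidef) : hA.sqrtᴴ = hA.sqrt := by
  unfold Matrix.PosSemidef.sqrt
  simp [Matrix.mul_assoc, Matrix.star_eq_conjTranspose]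

lemma quad_entry {d T : ℕ} (A : Matrix (Fin d) (Fin d) ℝ) (X : Matrix (Fin d) (Fin T) ℝ)
    (i j : Fin T) :
    (Xᴴ * A * X) i j = (fun k => X k i) ⬝ᵥ (A *ᵥ fun k => X k j) := by
  simp only [Matrix.mul_apply, Matrix.conjTranspose_apply, Matrix.mulVec, dotProduct,
    star_trivial, Finset.sum_mul, Finset.mul_sum]
  rw [Finset.sum_comm]
  exact Finset.sum_congr rfl fun a _ => Finset.sum_congr rfl fun b _ => by ring

lemma trace_quad {d T : ℕ} (A : Matrix (Fin d) (Fin d) ℝ) (X : Matrix (Fin d) (Fin T) ℝ) :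
    (Xᴴ * A * X).trace = ∑ t, (fun k => X k t) ⬝ᵥ (A *ᵥ fun k => X k t) := by
  simp only [Matrix.trace, Matrix.diag]
  exact Finset.sum_congr rfl fun t _ => quad_entry A X t t

lemma trace_nonneg' {n : Type*} [Fintype n] [DecidableEq n] {A : Matrix n n ℝ}
    (hA : A.PosSemidef) : 0 ≤ A.trace := by
  refine Finset.sum_nonneg fun i _ => ?_
  simpa [dotProduct, Matrix.mulVec, Pi.single_apply, Finset.sum_ite_eq,
    Finset.sum_ite_eq'] using hA.dotProduct_mulVec_nonneg (Pi.single i 1)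

lemma kanto {d : ℕ} {D : Matrix (Fin d) (Fin d) ℝ} (hD : D.PosDef) (u : Fin d → ℝ) :
    (u ⬝ᵥ u) ^ 2 ≤ (u ⬝ᵥ (D⁻¹ *ᵥ u)) * (u ⬝ᵥ (D *ᵥ u)) := by
  set R := hD.posSemidef.sqrt with hRdef
  have hRR : R * R = D := psd_sqrt_mul_self hD.posSemidef
  have hRH : Rᴴ = R := psd_sqrt_herm hD.posSemidef
  have hRT : Rᵀ = R := by rwa [Matrix.conjTranspose_eq_transpose_of_trivial] at hRH
  have hdet : IsUnit R.det := by
    have h2 : R.det * R.det = D.det := by rw [← Matrix.det_mul, hRR]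
    refine isUnit_iff_ne_zero.2 fun h0 => ?_
    rw [h0, mul_zero] at h2
    exact hD.det_pos.ne' h2.symm
  set a := R⁻¹ *ᵥ u with ha
  set b := R *ᵥ u with hb
  have hab : a ⬝ᵥ b = u ⬝ᵥ u := by
    rw [hb, Matrix.dotProduct_mulVec, ← Matrix.mulVec_transpose, hRT, ha,
      Matrix.mulVec_mulVec, Matrix.mul_nonsing_inv _ hdet, Matrix.one_mulVec]
  have haa : a ⬝ᵥ a = u ⬝ᵥ (D⁻¹ *ᵥ u) := by
    conv_lhs => rw [ha, Matrix.dotProduct_mulVec, ← Matrix.mulVec_transpose,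
      Matrix.transpose_nonsing_inv, hRT]
    rw [Matrix.mulVec_mulVec, ← Matrix.mul_inv_rev, hRR, dotProduct_comm]
  have hbb : b ⬝ᵥ b = u ⬝ᵥ (D *ᵥ u) := by
    conv_lhs => rw [hb, Matrix.dotProduct_mulVec, ← Matrix.mulVec_transpose, hRT]
    rw [Matrix.mulVec_mulVec, hRR, dotProduct_comm]
  have hcs := Finset.sum_mul_sq_le_sq_mul_sq Finset.univ a b
  rw [← hab, ← haa, ← hbb]
  simpa [dotProduct, sq] using hcs
lemma trace_conj_le {d T : ℕ} {D : Matrix (Fin d) (Fin d) ℝ} (hD : D.PosSemidef)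
    (Z : Matrix (Fin d) (Fin T) ℝ) (hZ : Z * (Zᴴ * Z) = Z) :
    (Zᴴ * D * Z).trace ≤ D.trace := by
  set P := Z * Zᴴ with hPdef
  have hPP : P * P = P := by
    rw [hPdef, Matrix.mul_assoc, ← Matrix.mul_assoc Zᴴ Z Zᴴ, ← Matrix.mul_assoc Z (Zᴴ * Z) Zᴴ, hZ]
  have hPH : Pᴴ = P := by
    rw [hPdef, Matrix.conjTranspose_mul, Matrix.conjTranspose_conjTranspose]
  set Q := (1 : Matrix (Fin d) (Fin d) ℝ) - P with hQdef
  have hQQ : Q * Q = Q := by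
    rw [hQdef, Matrix.sub_mul, Matrix.mul_sub, Matrix.mul_sub, Matrix.one_mul, Matrix.mul_one,
      hPP]
    simp [hPdef]
  have hQH : Qᴴ = Q := by
    rw [hQdef, Matrix.conjTranspose_sub, hPH, Matrix.conjTranspose_one]
  have hpsd : (Qᴴ * D * Q).PosSemidef := hD.conjTranspose_mul_mul_same Q
  have key : 0 ≤ (Q * D).trace := by
    have h1 : (Q * D).trace = (Qᴴ * D * Q).trace := by
      rw [hQH, Matrix.trace_mul_cycle Q D Q, hQQ]
    rw [h1]
    exact trace_nonneg' hpsd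
  have h2 : (Zᴴ * D * Z).trace = (P * D).trace := by
    rw [Matrix.trace_mul_cycle Zᴴ D Z, ← hPdef]
  have h3 : (Q * D).trace = D.trace - (P * D).trace := by
    rw [hQdef, Matrix.sub_mul, Matrix.one_mul, Matrix.trace_sub]
  rw [h2]
  linarith
lemma lower_bound {d T : ℕ} (Y : Matrix (Fin d) (Fin T) ℝ) (μ : Fin T → ℝ)
    (hYY : Yᴴ * Y = Matrix.diagonal μ) {D : Matrix (Fin d) (Fin d) ℝ} (hD : D.PosDef) :
    (∑ i, Real.sqrt (μ i)) ^ 2 ≤ D.trace * (Yᴴ * D⁻¹ * Y).trace := by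
  classical
  set u : Fin T → (Fin d → ℝ) := fun i => fun k => Y k i with hu
  have hcol : ∀ i, u i ⬝ᵥ u i = μ i := by
    intro i
    have h := quad_entry (1 : Matrix (Fin d) (Fin d) ℝ) Y i i
    rw [Matrix.mul_one] at h
    rw [hYY] at h
    simpa [Matrix.diagonal_apply_eq, Matrix.one_mulVec] using h.symm
  have hμ0 : ∀ i, 0 ≤ μ i := fun i => by
    rw [← hcol i]; exact Finset.sum_nonneg fun k _ => mul_self_nonneg _
  set q : Fin T → ℝ := fun i => u i ⬝ᵥ (D⁻¹ *ᵥ u i) with hq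
  set p : Fin T → ℝ := fun i => u i ⬝ᵥ (D *ᵥ u i) with hp
  have hq0 : ∀ i, 0 ≤ q i := fun i => by
    simpa [hq] using hD.inv.posSemidef.dotProduct_mulVec_nonneg (u i)
  have hqpos : ∀ i, 0 < μ i → 0 < q i := by
    intro i hi
    have hne : u i ≠ 0 := by
      intro h0
      have hci := hcol i
      rw [h0, zero_dotProduct] at hci
      exact hi.ne hci
    simpa [hq] using hD.inv.dotProduct_mulVec_pos hne
  have hK : ∀ i, μ i ^ 2 ≤ q i * p i := fun i => by
    have := kanto hD (u i); rwa [hcol i] at this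
  set g : Fin T → ℝ := fun i => if 0 < μ i then μ i / q i else 0 with hg
  have hCS : (∑ i, Real.sqrt (μ i)) ^ 2 ≤ (∑ i, q i) * (∑ i, g i) := by
    refine Finset.sum_sq_le_sum_mul_sum_of_sq_eq_mul Finset.univ
      (fun i _ => hq0 i) (fun i _ => ?_) (fun i _ => ?_)
    · by_cases hi : 0 < μ i
      · simp only [hg, if_pos hi]
        exact div_nonneg (hμ0 i) (hq0 i)
      · simp [hg, if_neg hi]
    · by_cases hi : 0 < μ i
      · simp only [hg, if_pos hi]
        rw [Real.sq_sqrt (hμ0 i), mul_div_cancel₀ _ (hqpos i hi).ne']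
      · have h0 : μ i = 0 := le_antisymm (not_lt.1 hi) (hμ0 i)
        simp [hg, if_neg hi, h0]
  have hqsum : (∑ i, q i) = (Yᴴ * D⁻¹ * Y).trace := by
    rw [trace_quad]
  -- now bound ∑ g by trace D
  set c : Fin T → ℝ := fun i => if 0 < μ i then (Real.sqrt (μ i))⁻¹ else 0 with hc
  set Z := Y * Matrix.diagonal c with hZdef
  have hZH : Zᴴ = Matrix.diagonal c * Yᴴ := by
    rw [hZdef, Matrix.conjTranspose_mul, Matrix.diagonal_conjTranspose]
    congr 1
  have hZZ : Zᴴ * Z = Matrix.diagonal (fun i => c i * μ i * c i) := by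
    rw [hZH, hZdef, Matrix.mul_assoc, ← Matrix.mul_assoc Yᴴ Y _, hYY]
    ext i j
    rcases eq_or_ne i j with rfl | hij
    · simp [Matrix.diagonal_mul_diagonal, Matrix.diagonal_apply_eq]
      ring
    · simp [Matrix.diagonal_mul_diagonal, Matrix.diagonal_apply_ne _ hij]
  have hcc : ∀ i, c i * (c i * μ i * c i) = c i := by
    intro i
    by_cases hi : 0 < μ i
    · have hs : Real.sqrt (μ i) ≠ 0 := (Real.sqrt_pos.2 hi).ne'
      have hsq : Real.sqrt (μ i) * Real.sqrt (μ i) = μ i := Real.mul_self_sqrt (hμ0 i)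
      simp only [hc, if_pos hi]
      rw [← hsq]
      field_simp
      rw [Real.sq_sqrt (sq_nonneg _)]
    · simp [hc, if_neg hi]
  have hZp : Z * (Zᴴ * Z) = Z := by
    conv_lhs => rw [hZZ, hZdef, Matrix.mul_assoc, Matrix.diagonal_mul_diagonal]
    conv_rhs => rw [hZdef]
    congr 1
    ext i j
    rcases eq_or_ne i j with rfl | hij
    · rw [Matrix.diagonal_apply_eq, Matrix.diagonal_apply_eq]
      exact hcc i
    · rw [Matrix.diagonal_apply_ne _ hij, Matrix.diagonal_apply_ne _ hij]
  have hZcol : ∀ i, (fun k => Z k i) = c i • u i := by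
    intro i
    funext k
    simp [hZdef, Matrix.mul_diagonal, hu, mul_comm]
  have hgle : ∀ i, g i ≤ (fun k => Z k i) ⬝ᵥ (D *ᵥ fun k => Z k i) := by
    intro i
    rw [hZcol i]
    rw [smul_dotProduct, Matrix.mulVec_smul, dotProduct_smul]
    by_cases hi : 0 < μ i
    · have hμpos := hi
      have hqp := hqpos i hi
      have hcc : c i = (Real.sqrt (μ i))⁻¹ := by simp [hc, if_pos hi]
      have hs : 0 < Real.sqrt (μ i) := Real.sqrt_pos.2 hi
      have hrhs : c i • (c i • p i) = p i / μ i := by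
        rw [hcc, smul_eq_mul, smul_eq_mul, ← mul_assoc]
        rw [← Real.sqrt_mul_self (hμ0 i)]
        field_simp
        rw [Real.sq_sqrt (Real.sqrt_nonneg _)]
        ring
      rw [hrhs]
      simp only [hg, if_pos hi]
      rw [div_le_div_iff₀ hqp hμpos]
      have := hK i
      nlinarith [hK i]
    · simp only [hg, if_neg hi]
      have hcc : c i = 0 := by simp [hc, if_neg hi]
      simp [hcc]
  have hgsum : (∑ i, g i) ≤ D.trace := by
    calc (∑ i, g i) ≤ ∑ i, (fun k => Z k i) ⬝ᵥ (D *ᵥ fun k => Z k i) :=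
          Finset.sum_le_sum fun i _ => hgle i
      _ = (Zᴴ * D * Z).trace := (trace_quad D Z).symm
      _ ≤ D.trace := trace_conj_le hD.posSemidef Z hZp
  calc (∑ i, Real.sqrt (μ i)) ^ 2 ≤ (∑ i, q i) * (∑ i, g i) := hCS
    _ ≤ (∑ i, q i) * D.trace := by
        refine mul_le_mul_of_nonneg_left hgsum (Finset.sum_nonneg fun i _ => hq0 i)
    _ = D.trace * (Yᴴ * D⁻¹ * Y).trace := by rw [hqsum]; ring
lemma upper_core {d T : ℕ} (Y : Matrix (Fin d) (Fin T) ℝ) (μ : Fin T → ℝ)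
    (hYY : Yᴴ * Y = Matrix.diagonal μ) (α δ : ℝ) (hαpos : 0 < α) (hδpos : 0 < δ) :
    ∃ D : Matrix (Fin d) (Fin d) ℝ, D.PosDef ∧
      D.trace = α * ((∑ i, Real.sqrt (μ i)) + δ * d) ∧
      (Yᴴ * D⁻¹ * Y).trace ≤ α⁻¹ * (∑ i, Real.sqrt (μ i)) := by
  classical
  set u : Fin T → (Fin d → ℝ) := fun i => fun k => Y k i with hu
  have hcol : ∀ i, u i ⬝ᵥ u i = μ i := by
    intro i
    have h := quad_entry (1 : Matrix (Fin d) (Fin d) ℝ) Y i i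
    rw [Matrix.mul_one] at h
    rw [hYY] at h
    simpa [Matrix.diagonal_apply_eq, Matrix.one_mulVec] using h.symm
  have hμ0 : ∀ i, 0 ≤ μ i := fun i => by
    rw [← hcol i]; exact Finset.sum_nonneg fun k _ => mul_self_nonneg _
  set c : Fin T → ℝ := fun i => if 0 < μ i then α * (Real.sqrt (μ i))⁻¹ else 0 with hc
  have hc0 : ∀ i, 0 ≤ c i := by
    intro i
    by_cases hi : 0 < μ i
    · simp only [hc, if_pos hi]; positivity
    · simp [hc, if_neg hi]
  have hcμ : ∀ i, c i * μ i = α * Real.sqrt (μ i) := by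
    intro i
    by_cases hi : 0 < μ i
    · have hs : Real.sqrt (μ i) ≠ 0 := (Real.sqrt_pos.2 hi).ne'
      have hsq : Real.sqrt (μ i) * Real.sqrt (μ i) = μ i := Real.mul_self_sqrt (hμ0 i)
      simp only [hc, if_pos hi]
      field_simp
      linear_combination (-1) * hsq
    · have h0 : μ i = 0 := le_antisymm (not_lt.1 hi) (hμ0 i)
      simp [hc, if_neg hi, h0]
  set G := Y * Matrix.diagonal c * Yᴴ with hGdef
  have hG : G.PosSemidef :=
    (Matrix.PosSemidef.diagonal (fun i => hc0 i)).mul_mul_conjTranspose_same Y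
  set E := Matrix.diagonal (fun _ : Fin d => α * δ) with hEdef
  have hE : E.PosDef := Matrix.PosDef.diagonal (fun i => by positivity)
  set D := G + E with hDdef
  have hD : D.PosDef := Matrix.PosDef.posSemidef_add hG hE
  have hdet : IsUnit D.det := hD.det_pos.ne'.isUnit
  have htrG : G.trace = α * ∑ i, Real.sqrt (μ i) := by
    rw [hGdef, Matrix.trace_mul_cycle, hYY, Matrix.diagonal_mul_diagonal,
      Matrix.trace_diagonal, Finset.mul_sum]
    exact Finset.sum_congr rfl fun i _ => by rw [mul_comm (μ i) (c i), hcμ i]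
  have htrE : E.trace = (d : ℝ) * (α * δ) := by
    rw [hEdef, Matrix.trace_diagonal]
    simp [Finset.sum_const, mul_comm]
  have htrD : D.trace = α * ((∑ i, Real.sqrt (μ i)) + δ * d) := by
    rw [hDdef, Matrix.trace_add, htrG, htrE]
    ring
  have husingle : ∀ j, u j = Y *ᵥ Pi.single j 1 := by
    intro j
    funext k
    simp [hu, Matrix.mulVec_single]
  have hGu : ∀ j, G *ᵥ u j = (α * Real.sqrt (μ j)) • u j := by
    intro j
    rw [husingle j, Matrix.mulVec_mulVec, hGdef, Matrix.mul_assoc (Y * Matrix.diagonal c) Yᴴ Y,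
      hYY, Matrix.mul_assoc Y (Matrix.diagonal c) (Matrix.diagonal μ),
      Matrix.diagonal_mul_diagonal, ← Matrix.mulVec_mulVec]
    funext k
    simp only [Matrix.mulVec_single, Matrix.mulVec, dotProduct]
    simp [Matrix.diagonal_apply, Pi.single_apply, Finset.sum_ite_eq', hcμ j, Pi.smul_apply,
      smul_eq_mul]
    ring
  have hEu : ∀ j, E *ᵥ u j = (α * δ) • u j := by
    intro j
    funext k
    simp [hEdef, Matrix.mulVec_diagonal, Pi.smul_apply, smul_eq_mul]
  have hDu : ∀ j, D *ᵥ u j = (α * (Real.sqrt (μ j) + δ)) • u j := by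
    intro j
    rw [hDdef, Matrix.add_mulVec, hGu j, hEu j, ← add_smul]
    congr 1
    ring
  have hβj : ∀ j : Fin T, 0 < α * (Real.sqrt (μ j) + δ) := by
    intro j
    have := Real.sqrt_nonneg (μ j)
    positivity
  have hDinvu : ∀ j, D⁻¹ *ᵥ u j = (α * (Real.sqrt (μ j) + δ))⁻¹ • u j := by
    intro j
    have h1 : D *ᵥ ((α * (Real.sqrt (μ j) + δ))⁻¹ • u j) = u j := by
      rw [Matrix.mulVec_smul, hDu j, smul_smul, inv_mul_cancel₀ (hβj j).ne', one_smul]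
    calc D⁻¹ *ᵥ u j = D⁻¹ *ᵥ (D *ᵥ ((α * (Real.sqrt (μ j) + δ))⁻¹ • u j)) := by rw [h1]
      _ = (D⁻¹ * D) *ᵥ ((α * (Real.sqrt (μ j) + δ))⁻¹ • u j) := by rw [Matrix.mulVec_mulVec]
      _ = (α * (Real.sqrt (μ j) + δ))⁻¹ • u j := by
          rw [Matrix.nonsing_inv_mul _ hdet, Matrix.one_mulVec]
  have hstrace : (Yᴴ * D⁻¹ * Y).trace = ∑ j, (α * (Real.sqrt (μ j) + δ))⁻¹ * μ j := by
    rw [trace_quad]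
    refine Finset.sum_congr rfl fun j _ => ?_
    show u j ⬝ᵥ (D⁻¹ *ᵥ u j) = _
    rw [hDinvu j, dotProduct_smul, smul_eq_mul, hcol j]
  have hterm : ∀ j, (α * (Real.sqrt (μ j) + δ))⁻¹ * μ j ≤ α⁻¹ * Real.sqrt (μ j) := by
    intro j
    have hs0 : 0 ≤ Real.sqrt (μ j) := Real.sqrt_nonneg _
    have hsq : Real.sqrt (μ j) * Real.sqrt (μ j) = μ j := Real.mul_self_sqrt (hμ0 j)
    rw [← div_eq_inv_mul, div_le_iff₀ (hβj j)]
    have h2 : α⁻¹ * Real.sqrt (μ j) * (α * (Real.sqrt (μ j) + δ)) =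
        Real.sqrt (μ j) * (Real.sqrt (μ j) + δ) := by
      field_simp
    rw [h2]
    nlinarith [hsq, hδpos, hs0]
  have hsum : (Yᴴ * D⁻¹ * Y).trace ≤ α⁻¹ * ∑ i, Real.sqrt (μ i) := by
    rw [hstrace, Finset.mul_sum]
    exact Finset.sum_le_sum fun j _ => hterm j
  exact ⟨D, hD, htrD, hsum⟩

lemma upper_bound {d T : ℕ} (Y : Matrix (Fin d) (Fin T) ℝ) (μ : Fin T → ℝ)
    (hYY : Yᴴ * Y = Matrix.diagonal μ) (lam ε : ℝ) (hlam : 0 < lam) (hε : 0 < ε) :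
    ∃ D : Matrix (Fin d) (Fin d) ℝ, D.PosDef ∧ D.trace < 1 / lam ∧
      (Yᴴ * D⁻¹ * Y).trace ≤ lam * (∑ i, Real.sqrt (μ i)) ^ 2 + ε := by
  have hτ0 : 0 ≤ ∑ i, Real.sqrt (μ i) := Finset.sum_nonneg fun i _ => Real.sqrt_nonneg _
  obtain ⟨τ, hτdef⟩ : ∃ τ : ℝ, τ = ∑ i, Real.sqrt (μ i) := ⟨_, rfl⟩
  rw [← hτdef] at hτ0 ⊢
  obtain ⟨X, hXdef⟩ : ∃ X : ℝ, X = τ * (lam * d + 1) := ⟨_, rfl⟩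
  have hX0 : 0 ≤ X := by rw [hXdef]; positivity
  obtain ⟨β, hβdef⟩ : ∃ β : ℝ, β = ε / (X + 1) := ⟨_, rfl⟩
  have hβpos : 0 < β := by rw [hβdef]; positivity
  obtain ⟨P, hPdef⟩ : ∃ P : ℝ, P = lam * (τ + β * d) + β := ⟨_, rfl⟩
  have hPpos : 0 < P := by rw [hPdef]; positivity
  obtain ⟨D, hD, htrD, hval⟩ := upper_core Y μ hYY P⁻¹ β (by positivity) hβpos
  rw [← hτdef] at htrD hval
  refine ⟨D, hD, ?_, ?_⟩
  · rw [htrD, inv_mul_eq_div, div_lt_div_iff₀ hPpos hlam, hPdef]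
    nlinarith [hβpos, hτ0, hβpos.le]
  · refine le_trans hval ?_
    rw [inv_inv]
    have hβX : β * X ≤ ε := by
      rw [hβdef, div_mul_eq_mul_div, div_le_iff₀ (by positivity)]
      nlinarith [hε, hX0]
    have hexp : P * τ = lam * τ ^ 2 + β * X := by
      rw [hPdef, hXdef]; ring
    linarith [hexp, hβX]

end StmtAux

theorem stmt10 {d T : ℕ} (W : Matrix (Fin d) (Fin T) ℝ) (lam : ℝ) (hlam : 0 < lam) :
    ((Matrix.PosSemidef.sqrt (Matrix.posSemidef_conjTranspose_mul_self W)).trace) ^ 2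
      = (1 / lam) * sInf {s : ℝ | ∃ D : Matrix (Fin d) (Fin d) ℝ,
          D.PosDef ∧ D.trace < 1 / lam ∧
          s = ∑ t, (fun i => W i t) ⬝ᵥ (D⁻¹ *ᵥ fun i => W i t)} := by
  classical
  set μ := (Matrix.posSemidef_conjTranspose_mul_self W).1.eigenvalues with hμdef
  set V := ((Matrix.posSemidef_conjTranspose_mul_self W).1.eigenvectorUnitary :
    Matrix (Fin T) (Fin T) ℝ) with hVdef
  have hVsV : Vᴴ * V = 1 := by
    have h := Matrix.UnitaryGroup.star_mul_self
      ((Matrix.posSemidef_conjTranspose_mul_self W).1.eigenvectorUnitary)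
    rwa [Matrix.star_eq_conjTranspose] at h
  have hVVs : V * Vᴴ = 1 := by rw [mul_eq_one_comm]; exact hVsV
  have hspec' : Wᴴ * W = V * Matrix.diagonal μ * Vᴴ := by
    have h := (Matrix.posSemidef_conjTranspose_mul_self W).1.spectral_theorem
    rw [Unitary.conjStarAlgAut_apply, Matrix.star_eq_conjTranspose] at h
    simp [RCLike.ofReal_real_eq_id] at h
    exact h
  have hYY : (W * V)ᴴ * (W * V) = Matrix.diagonal μ := by
    rw [Matrix.conjTranspose_mul, Matrix.mul_assoc, ← Matrix.mul_assoc Wᴴ W V, hspec']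
    simp only [Matrix.mul_assoc]
    rw [hVsV, Matrix.mul_one, ← Matrix.mul_assoc, hVsV, Matrix.one_mul]
  have htrsqrt : (Matrix.PosSemidef.sqrt (Matrix.posSemidef_conjTranspose_mul_self W)).trace
      = ∑ i, Real.sqrt (μ i) := by
    have h : (Matrix.PosSemidef.sqrt (Matrix.posSemidef_conjTranspose_mul_self W))
        = V * Matrix.diagonal (fun i => √(μ i)) * Vᴴ := rfl
    rw [h, Matrix.trace_mul_cycle, hVsV, Matrix.one_mul, Matrix.trace_diagonal]
  have htr_eq : ∀ A : Matrix (Fin d) (Fin d) ℝ,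
      ((W * V)ᴴ * A * (W * V)).trace = (Wᴴ * A * W).trace := by
    intro A
    calc ((W * V)ᴴ * A * (W * V)).trace
        = (Vᴴ * ((Wᴴ * A * W) * V)).trace := by
          rw [Matrix.conjTranspose_mul]; simp only [Matrix.mul_assoc]
      _ = (((Wᴴ * A * W) * V) * Vᴴ).trace := Matrix.trace_mul_comm _ _
      _ = (Wᴴ * A * W).trace := by rw [Matrix.mul_assoc, hVVs, Matrix.mul_one]
  have hform : ∀ A : Matrix (Fin d) (Fin d) ℝ,
      (∑ t, (fun i => W i t) ⬝ᵥ (A *ᵥ fun i => W i t))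
        = ((W * V)ᴴ * A * (W * V)).trace := by
    intro A
    rw [htr_eq, trace_quad]
  set S := {s : ℝ | ∃ D : Matrix (Fin d) (Fin d) ℝ,
      D.PosDef ∧ D.trace < 1 / lam ∧
      s = ∑ t, (fun i => W i t) ⬝ᵥ (D⁻¹ *ᵥ fun i => W i t)} with hSdef
  have hlow : ∀ s ∈ S, lam * (∑ i, Real.sqrt (μ i)) ^ 2 ≤ s := by
    rintro s ⟨D, hD, htr, rfl⟩
    rw [hform D⁻¹]
    have h2 := lower_bound (W * V) μ hYY hD
    have h3 : 0 ≤ ((W * V)ᴴ * D⁻¹ * (W * V)).trace :=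
      trace_nonneg' (hD.inv.posSemidef.conjTranspose_mul_mul_same (W * V))
    have h4 : D.trace * ((W * V)ᴴ * D⁻¹ * (W * V)).trace
        ≤ (1 / lam) * ((W * V)ᴴ * D⁻¹ * (W * V)).trace :=
      mul_le_mul_of_nonneg_right htr.le h3
    have h5 : (∑ i, Real.sqrt (μ i)) ^ 2 ≤ (1 / lam) * ((W * V)ᴴ * D⁻¹ * (W * V)).trace :=
      le_trans h2 h4
    have h6 := mul_le_mul_of_nonneg_left h5 hlam.le
    have h7 : lam * ((1 / lam) * ((W * V)ᴴ * D⁻¹ * (W * V)).trace)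
        = ((W * V)ᴴ * D⁻¹ * (W * V)).trace := by
      field_simp
    linarith
  have hupper : ∀ ε : ℝ, 0 < ε → ∃ s ∈ S, s ≤ lam * (∑ i, Real.sqrt (μ i)) ^ 2 + ε := by
    intro ε hε
    obtain ⟨D, hD, htr, hval⟩ := upper_bound (W * V) μ hYY lam ε hlam hε
    refine ⟨∑ t, (fun i => W i t) ⬝ᵥ (D⁻¹ *ᵥ fun i => W i t), ⟨D, hD, htr, rfl⟩, ?_⟩
    rw [hform D⁻¹]
    exact hval
  obtain ⟨s₀, hs₀S, _⟩ := hupper 1 one_pos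
  have hne : S.Nonempty := ⟨s₀, hs₀S⟩
  have hbdd : BddBelow S := ⟨lam * (∑ i, Real.sqrt (μ i)) ^ 2, fun s hs => hlow s hs⟩
  have hle : sInf S ≤ lam * (∑ i, Real.sqrt (μ i)) ^ 2 := by
    rw [Real.sInf_le_iff hbdd hne]
    intro ε hε
    obtain ⟨s, hsS, hsle⟩ := hupper (ε / 2) (by positivity)
    exact ⟨s, hsS, by linarith⟩
  have hge : lam * (∑ i, Real.sqrt (μ i)) ^ 2 ≤ sInf S := le_csInf hne hlow
  have hInf : sInf S = lam * (∑ i, Real.sqrt (μ i)) ^ 2 := le_antisymm hle hge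
  rw [htrsqrt, hInf]
  field_simp
end

section
/- Let H be a nonempty closed convex subset of a Hilbert space with diameter at most 𝒟, and let f₁,…,f_T : H → ℝ be convex and G-Lipschitz. Consider projected online subgradient descent: h^(t+1) = proj_H(h^(t) − γₜ uₜ) with uₜ ∈ ∂fₜ(h^(t)) and step sizes γₜ = c/√t for c > 0. Then the average regret satisfies (1/T)Σₜ fₜ(h^(t)) − min_{h∈H} (1/T)Σₜ fₜ(h) ≤ (1/2)(𝒟²/c + 2cG²)/√T. -/
open Matrix Finset MeasureTheory RealInnerProductSpace

lemma ogd_sum_inv_sqrt : ∀ T : ℕ, ∑ t ∈ Finset.range T, 1 / Real.sqrt (t + 1) ≤ 2 * Real.sqrt T := by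
  intro T
  induction T with
  | zero => simp
  | succ T ih =>
    rw [Finset.sum_range_succ]
    have hs : 0 < Real.sqrt (T + 1) := Real.sqrt_pos.mpr (by positivity)
    have hr : 0 ≤ Real.sqrt T := Real.sqrt_nonneg _
    have hr2 : Real.sqrt T * Real.sqrt T = T := Real.mul_self_sqrt (by positivity)
    have hs2 : Real.sqrt ((T:ℝ) + 1) * Real.sqrt ((T:ℝ) + 1) = (T:ℝ) + 1 :=
      Real.mul_self_sqrt (by positivity)
    have key : 1 / Real.sqrt ((T:ℝ) + 1) ≤ 2 * (Real.sqrt ((T:ℝ)+1) - Real.sqrt T) := by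
      rw [div_le_iff₀ hs]
      nlinarith [sq_nonneg (Real.sqrt T - Real.sqrt ((T:ℝ)+1))]
    push_cast
    linarith [ih, key]

lemma ogd_telescope_bound (a : ℕ → ℝ) (D : ℝ) (ha0 : ∀ t, 0 ≤ a t) (haD : ∀ t, a t ≤ D) :
    ∀ T : ℕ, ∑ t ∈ Finset.range T, (a t - a (t + 1)) * Real.sqrt (t + 1)
      ≤ D * Real.sqrt T - a T * Real.sqrt T := by
  intro T
  induction T with
  | zero => simp
  | succ T ih =>
    rw [Finset.sum_range_succ]
    have h1 : Real.sqrt T ≤ Real.sqrt ((T:ℝ) + 1) := Real.sqrt_le_sqrt (by linarith)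
    have h2 : a T ≤ D := haD T
    have h3 : 0 ≤ a (T + 1) := ha0 (T + 1)
    have h4 : 0 ≤ Real.sqrt ((T:ℝ) + 1) := Real.sqrt_nonneg _
    have h5 : 0 ≤ a T := ha0 T
    push_cast
    nlinarith [ih, mul_le_mul_of_nonneg_right h2 (sub_nonneg.mpr h1)]

lemma ogd_proj_contract {E : Type*} [NormedAddCommGroup E] [InnerProductSpace ℝ E]
    (H : Set E) (hne : H.Nonempty) (hcv : Convex ℝ H)
    (proj : E → E) (hproj : ∀ x, proj x ∈ H ∧ ∀ y ∈ H, ‖proj x - x‖ ≤ ‖y - x‖) :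
    ∀ x, ∀ z ∈ H, ‖proj x - z‖ ^ 2 ≤ ‖x - z‖ ^ 2 := by
  haveI : Nonempty H := hne.to_subtype
  have hvar : ∀ x, ∀ w ∈ H, ⟪x - proj x, w - proj x⟫ ≤ 0 := by
    intro x
    rw [← norm_eq_iInf_iff_real_inner_le_zero hcv (hproj x).1]
    apply le_antisymm
    · apply le_ciInf
      intro w
      rw [norm_sub_rev x (proj x), norm_sub_rev x w]
      exact (hproj x).2 w w.2
    · refine ciInf_le ?_ (⟨proj x, (hproj x).1⟩ : H)
      exact ⟨0, by rintro v ⟨w, rfl⟩; exact norm_nonneg _⟩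
  intro x z hz
  have h1 := hvar x z hz
  have h2 : ‖x - z‖ ^ 2 = ‖x - proj x‖ ^ 2 + 2 * ⟪x - proj x, proj x - z⟫ + ‖proj x - z‖ ^ 2 := by
    have e : x - z = (x - proj x) + (proj x - z) := by abel
    rw [e, norm_add_sq_real]
  have h3 : ⟪x - proj x, proj x - z⟫ = -⟪x - proj x, z - proj x⟫ := by
    rw [← inner_neg_right]
    congr 1
    abel
  nlinarith [sq_nonneg ‖x - proj x‖]

theorem stmt11 {E : Type*} [NormedAddCommGroup E] [InnerProductSpace ℝ E] [CompleteSpace E]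
    (H : Set E) (hne : H.Nonempty) (hcl : IsClosed H) (hcv : Convex ℝ H)
    (𝒟 G c : ℝ) (hc : 0 < c)
    (hdiam : ∀ x ∈ H, ∀ y ∈ H, ‖x - y‖ ≤ 𝒟)
    (T : ℕ) (hT : 0 < T)
    (f : ℕ → E → ℝ) (hconv : ∀ t, ConvexOn ℝ H (f t))
    (proj : E → E) (hproj : ∀ x, proj x ∈ H ∧ ∀ y ∈ H, ‖proj x - x‖ ≤ ‖y - x‖)
    (h u : ℕ → E) (h0 : h 0 ∈ H)
    (hsub : ∀ t, ‖u t‖ ≤ G ∧ ∀ z ∈ H, f t (h t) + ⟪u t, z - h t⟫ ≤ f t z)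
    (hupd : ∀ t, h (t + 1) = proj (h t - (c / Real.sqrt (t + 1)) • u t))
    (hstar : E) (hstarH : hstar ∈ H)
    (hmin : ∀ z ∈ H, ∑ t ∈ Finset.range T, f t hstar ≤ ∑ t ∈ Finset.range T, f t z) :
    (1 / T : ℝ) * ∑ t ∈ Finset.range T, f t (h t)
        - (1 / T : ℝ) * ∑ t ∈ Finset.range T, f t hstar
      ≤ (1 / 2) * (𝒟 ^ 2 / c + 2 * c * G ^ 2) / Real.sqrt T := by
  have hG : 0 ≤ G := le_trans (norm_nonneg _) (hsub 0).1
  -- all iterates are in H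
  have hH : ∀ t, h t ∈ H := by
    intro t
    induction t with
    | zero => exact h0
    | succ t _ => rw [hupd t]; exact (hproj _).1
  have hcontr := ogd_proj_contract H hne hcv proj hproj
  set a : ℕ → ℝ := fun t => ‖h t - hstar‖ ^ 2 with ha
  have ha0 : ∀ t, 0 ≤ a t := fun t => sq_nonneg _
  have haD : ∀ t, a t ≤ 𝒟 ^ 2 := by
    intro t
    exact pow_le_pow_left₀ (norm_nonneg _) (hdiam (h t) (hH t) hstar hstarH) 2
  -- per-step inequality
  have key : ∀ t : ℕ, f t (h t) - f t hstar
      ≤ (a t - a (t + 1)) * Real.sqrt (t + 1) / (2 * c)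
        + (c / Real.sqrt (t + 1)) * G ^ 2 / 2 := by
    intro t
    set s : ℝ := Real.sqrt (t + 1) with hs
    have hspos : 0 < s := Real.sqrt_pos.mpr (by positivity)
    set γ : ℝ := c / s with hγ
    have hγpos : 0 < γ := div_pos hc hspos
    have hγs : γ * s = c := by rw [hγ, div_mul_cancel₀ _ hspos.ne']
    -- descent step
    have step : a (t + 1) ≤ a t - 2 * γ * ⟪u t, h t - hstar⟫ + γ ^ 2 * ‖u t‖ ^ 2 := by
      have e1 : a (t + 1) ≤ ‖(h t - γ • u t) - hstar‖ ^ 2 := by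
        rw [ha]
        simp only []
        rw [hupd t]
        exact hcontr _ hstar hstarH
      have e2 : (h t - γ • u t) - hstar = (h t - hstar) - γ • u t := by abel
      have e3 : ‖(h t - hstar) - γ • u t‖ ^ 2
          = a t - 2 * γ * ⟪u t, h t - hstar⟫ + γ ^ 2 * ‖u t‖ ^ 2 := by
        rw [norm_sub_sq_real, real_inner_smul_right, norm_smul]
        rw [real_inner_comm]
        rw [Real.norm_eq_abs, abs_of_pos hγpos]
        ring_nf
        simp only [ha]
        ring
      rw [e2, e3] at e1
      exact e1
    have hfI : f t (h t) - f t hstar ≤ ⟪u t, h t - hstar⟫ := by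
      have := (hsub t).2 hstar hstarH
      have e : ⟪u t, hstar - h t⟫ = -⟪u t, h t - hstar⟫ := by
        rw [← inner_neg_right]; congr 1; abel
      rw [e] at this
      linarith
    have hU : ‖u t‖ ^ 2 ≤ G ^ 2 := pow_le_pow_left₀ (norm_nonneg _) (hsub t).1 2
    have h1 : 2 * γ * (f t (h t) - f t hstar) ≤ a t - a (t + 1) + γ ^ 2 * G ^ 2 := by
      nlinarith [mul_le_mul_of_nonneg_left hfI (by linarith : (0:ℝ) ≤ 2 * γ),
        mul_le_mul_of_nonneg_left hU (sq_nonneg γ)]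
    have h2 : ((a t - a (t + 1)) * s / (2 * c) + γ * G ^ 2 / 2) * (2 * γ)
        = a t - a (t + 1) + γ ^ 2 * G ^ 2 := by
      field_simp [hγ]
      rw [← hγs]
      ring
    have h3 : (f t (h t) - f t hstar) * (2 * γ)
        ≤ ((a t - a (t + 1)) * s / (2 * c) + γ * G ^ 2 / 2) * (2 * γ) := by
      rw [h2]; linarith [h1]
    exact le_of_mul_le_mul_right h3 (by linarith)
  -- sum up
  have hsum : ∑ t ∈ Finset.range T, (f t (h t) - f t hstar)
      ≤ 𝒟 ^ 2 * Real.sqrt T / (2 * c) + c * G ^ 2 * Real.sqrt T := by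
    have hb1 : ∑ t ∈ Finset.range T, (f t (h t) - f t hstar)
        ≤ ∑ t ∈ Finset.range T, ((a t - a (t + 1)) * Real.sqrt (t + 1) / (2 * c)
            + (c / Real.sqrt (t + 1)) * G ^ 2 / 2) :=
      Finset.sum_le_sum fun t _ => key t
    have hb2 : ∑ t ∈ Finset.range T, ((a t - a (t + 1)) * Real.sqrt (t + 1) / (2 * c)
            + (c / Real.sqrt (t + 1)) * G ^ 2 / 2)
        = (∑ t ∈ Finset.range T, (a t - a (t + 1)) * Real.sqrt (t + 1)) / (2 * c)
          + (c * G ^ 2 / 2) * ∑ t ∈ Finset.range T, 1 / Real.sqrt (t + 1) := by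
      rw [Finset.sum_add_distrib, Finset.sum_div, Finset.mul_sum]
      congr 1
      refine Finset.sum_congr rfl fun t _ => ?_
      ring
    have hb3 : (∑ t ∈ Finset.range T, (a t - a (t + 1)) * Real.sqrt (t + 1)) / (2 * c)
        ≤ 𝒟 ^ 2 * Real.sqrt T / (2 * c) := by
      apply div_le_div_of_nonneg_right ?_ (by linarith)
      have := ogd_telescope_bound a (𝒟 ^ 2) ha0 haD T
      nlinarith [mul_nonneg (ha0 T) (Real.sqrt_nonneg (T:ℝ))]
    have hb4 : (c * G ^ 2 / 2) * ∑ t ∈ Finset.range T, 1 / Real.sqrt (t + 1)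
        ≤ (c * G ^ 2 / 2) * (2 * Real.sqrt T) :=
      mul_le_mul_of_nonneg_left (ogd_sum_inv_sqrt T) (by positivity)
    calc ∑ t ∈ Finset.range T, (f t (h t) - f t hstar) ≤ _ := hb1
      _ = _ := hb2
      _ ≤ 𝒟 ^ 2 * Real.sqrt T / (2 * c) + (c * G ^ 2 / 2) * (2 * Real.sqrt T) := by
          exact add_le_add hb3 hb4
      _ = 𝒟 ^ 2 * Real.sqrt T / (2 * c) + c * G ^ 2 * Real.sqrt T := by ring
  have hTpos : (0:ℝ) < T := by exact_mod_cast hT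
  have hsT : Real.sqrt T * Real.sqrt T = (T:ℝ) := Real.mul_self_sqrt (le_of_lt hTpos)
  have hsTpos : 0 < Real.sqrt T := Real.sqrt_pos.mpr hTpos
  have e0 : (1 / T : ℝ) * ∑ t ∈ Finset.range T, f t (h t)
      - (1 / T : ℝ) * ∑ t ∈ Finset.range T, f t hstar
      = (1 / T : ℝ) * ∑ t ∈ Finset.range T, (f t (h t) - f t hstar) := by
    rw [Finset.sum_sub_distrib]
    ring
  rw [e0]
  have e1 : (1 / T : ℝ) * (𝒟 ^ 2 * Real.sqrt T / (2 * c) + c * G ^ 2 * Real.sqrt T)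
      = (1 / 2) * (𝒟 ^ 2 / c + 2 * c * G ^ 2) / Real.sqrt T := by
    field_simp
    linear_combination (𝒟^2 + 2*c^2*G^2) * hsT
  calc (1 / T : ℝ) * ∑ t ∈ Finset.range T, (f t (h t) - f t hstar)
      ≤ (1 / T : ℝ) * (𝒟 ^ 2 * Real.sqrt T / (2 * c) + c * G ^ 2 * Real.sqrt T) :=
        mul_le_mul_of_nonneg_left hsum (by positivity)
    _ = _ := e1
end
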